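/- arXiv:0911.1283 — 4 statements merged into one kernel-verified Lean document; each statement's English description precedes it below -/
import Mathlib

section
/- Let B be a centered ellipsoid in a real separable Hilbert space H with finite k-content |B|_k. Then there is a constant C_k depending only on k such that for all y_1, …, y_k ∈ B, det(0, y_1, …, y_k) ≤ C_k |B|_k. -/
open MeasureTheory
open scoped ENNReal BigOperators RealInnerProductSpace

noncomputable section

/-- `det(0, y₁, …, y_k)`: the square root of the Gram determinant of `y₁,…,y_k`,
i.e. `k!` times the `k`-dimensional volume of the simplex with vertices `0, y₁, …, y_k`. -/
noncomputable def vol0 {H : Type*} [NormedAddCommGroup H] [InnerProductSpace ℝ H]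
    {k : ℕ} (y : Fin k → H) : ℝ :=
  Real.sqrt (Matrix.det (Matrix.of fun i j => ⟪y i, y j⟫))

/-- A centered ellipsoid in `H`: the data of a countable orthonormal basis `ω`
together with lengths `ℓ i ∈ [0, ∞]`. -/
structure CenteredEllipsoid (H : Type*) [NormedAddCommGroup H] [InnerProductSpace ℝ H] where
  ι : Type
  count : Countable ι
  ω : ι → H
  orth : Orthonormal ℝ ω
  dense_span : (Submodule.span ℝ (Set.range ω)).topologicalClosure = ⊤
  ℓ : ι → ℝ≥0∞

/-- The set of points of a centered ellipsoid: `{x : Σᵢ |⟨x, ωᵢ⟩|²/ℓᵢ² ≤ 1}`. -/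
def CenteredEllipsoid.set {H : Type*} [NormedAddCommGroup H] [InnerProductSpace ℝ H]
    (B : CenteredEllipsoid H) : Set H :=
  {x | ∑' i, ((‖⟪x, B.ω i⟫‖₊ : ℝ≥0∞)) ^ 2 / (B.ℓ i) ^ 2 ≤ 1}

/-- The `k`-content of a centered ellipsoid: the supremum of `ℓ_{i₁} ⋯ ℓ_{i_k}`
over all choices of `k` distinct indices. -/
def CenteredEllipsoid.content {H : Type*} [NormedAddCommGroup H] [InnerProductSpace ℝ H]
    (B : CenteredEllipsoid H) (k : ℕ) : ℝ≥0∞ :=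
  ⨆ s : Fin k ↪ B.ι, ∏ j, B.ℓ (s j)

end

section Aux

/-- Finite-dimensional core estimate: a Cauchy–Binet style bound for the Gram
determinant of vectors whose coordinates are `ℓ`-scaled vectors of norm at most one. -/
lemma finite_core {ι : Type} [DecidableEq ι] {k : ℕ} (F : Finset ι)
    (A b : Fin k → ι → ℝ) (ℓr : ι → ℝ) (L : ℝ) (hL : 0 ≤ L)
    (hab : ∀ i m, A i m = ℓr m * b i m)
    (hb : ∀ i, ∑ m ∈ F, (b i m)^2 ≤ 1)
    (hprod : ∀ g : Fin k → ι, Function.Injective g → (∏ j, ℓr (g j)) ≤ L)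
    (hℓ : ∀ m, 0 ≤ ℓr m) :
    Matrix.det (Matrix.of fun i j => ∑ m ∈ F, A i m * A j m) ≤ (k.factorial : ℝ) * L^2 := by
  classical
  set f := (Matrix.detRowAlternating : (Fin k → ℝ) [⋀^Fin k]→ₗ[ℝ] ℝ) with hf
  set w : ι → (Fin k → ℝ) := fun m => fun j => A j m with hw
  set D : (Fin k → ι) → ℝ := fun r => Matrix.det (Matrix.of fun i j => A j (r i)) with hD
  have expand : Matrix.det (Matrix.of fun i j => ∑ m ∈ F, A i m * A j m)
      = ∑ r ∈ Fintype.piFinset (fun _ : Fin k => F), (∏ i, A i (r i)) * D r := by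
    have h1 : Matrix.det (Matrix.of fun i j => ∑ m ∈ F, A i m * A j m)
        = f (fun i => ∑ m ∈ F, A i m • w m) := by
      congr 1
      funext i j
      simp [w, Finset.sum_apply, smul_eq_mul]
    rw [h1]
    have h2 := f.toMultilinearMap.map_sum_finset (fun i m => A i m • w m) (fun _ => F)
    rw [AlternatingMap.coe_multilinearMap] at h2
    rw [h2]
    refine Finset.sum_congr rfl fun r _ => ?_
    have h3 := f.toMultilinearMap.map_smul_univ (fun i => A i (r i)) (fun i => w (r i))
    rw [AlternatingMap.coe_multilinearMap] at h3
    simp only [smul_eq_mul] at h3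
    refine h3.trans ?_
    rfl
  set T : (Fin k → ι) → ℝ := fun r =>
    L^2 * ∑ σ : Equiv.Perm (Fin k), (∏ i, |b i (r i)|) * ∏ i, |b (σ⁻¹ i) (r i)| with hT
  have hTnn : ∀ r, 0 ≤ T r := by
    intro r
    apply mul_nonneg (sq_nonneg L)
    apply Finset.sum_nonneg
    intro σ _
    positivity
  have key : ∀ r : Fin k → ι, (∏ i, A i (r i)) * D r ≤ T r := by
    intro r
    by_cases hr : Function.Injective r
    · have hcb : |∏ i, A i (r i)| ≤ L * ∏ i, |b i (r i)| := by
        rw [Finset.abs_prod]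
        have : ∀ i ∈ Finset.univ, |A i (r i)| = ℓr (r i) * |b i (r i)| := by
          intro i _
          rw [hab, abs_mul, abs_of_nonneg (hℓ (r i))]
        rw [Finset.prod_congr rfl this, Finset.prod_mul_distrib]
        exact mul_le_mul_of_nonneg_right (hprod r hr)
          (Finset.prod_nonneg fun i _ => abs_nonneg _)
      have hDb : |D r| ≤ ∑ σ : Equiv.Perm (Fin k), L * ∏ i, |b i (r (σ i))| := by
        simp only [hD]
        rw [Matrix.det_apply']
        refine le_trans (Finset.abs_sum_le_sum_abs _ _) (Finset.sum_le_sum fun σ _ => ?_)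
        rw [abs_mul, Finset.abs_prod]
        have hε : |(Equiv.Perm.sign σ : ℝ)| = 1 := by
          rcases Int.units_eq_one_or (Equiv.Perm.sign σ) with h | h <;> simp [h]
        rw [hε, one_mul]
        have : ∀ i ∈ Finset.univ, |(Matrix.of fun i j => A j (r i)) (σ i) i|
            = ℓr (r (σ i)) * |b i (r (σ i))| := by
          intro i _
          simp only [Matrix.of_apply]
          rw [hab, abs_mul, abs_of_nonneg (hℓ (r (σ i)))]
        rw [Finset.prod_congr rfl this, Finset.prod_mul_distrib]
        refine mul_le_mul_of_nonneg_right ?_ (Finset.prod_nonneg fun i _ => abs_nonneg _)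
        exact hprod (r ∘ σ) (hr.comp σ.injective)
      calc (∏ i, A i (r i)) * D r ≤ |(∏ i, A i (r i)) * D r| := le_abs_self _
        _ = |∏ i, A i (r i)| * |D r| := abs_mul _ _
        _ ≤ (L * ∏ i, |b i (r i)|) * ∑ σ : Equiv.Perm (Fin k), L * ∏ i, |b i (r (σ i))| := by
            refine mul_le_mul hcb hDb (abs_nonneg _) ?_
            positivity
        _ = L^2 * ∑ σ : Equiv.Perm (Fin k), (∏ i, |b i (r i)|) * ∏ i, |b i (r (σ i))| := by
            rw [Finset.mul_sum, Finset.mul_sum]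
            exact Finset.sum_congr rfl fun σ _ => by ring
        _ = T r := by
            rw [hT]
            congr 1
            refine Finset.sum_congr rfl fun σ _ => ?_
            congr 1
            have := Equiv.prod_comp σ (fun i => |b (σ⁻¹ i) (r i)|)
            simp only [Equiv.Perm.inv_def, Equiv.symm_apply_apply] at this
            exact this
    · have : D r = 0 := by
        obtain ⟨i, i', hii', hne⟩ : ∃ i i', r i = r i' ∧ i ≠ i' := by
          simp only [Function.Injective, not_forall] at hr
          obtain ⟨i, i', h1, h2⟩ := hr
          exact ⟨i, i', h1, h2⟩
        exact Matrix.det_zero_of_row_eq hne (by funext j; simp [hii'])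
      rw [this, mul_zero]
      exact hTnn r
  calc Matrix.det (Matrix.of fun i j => ∑ m ∈ F, A i m * A j m)
      = ∑ r ∈ Fintype.piFinset (fun _ : Fin k => F), (∏ i, A i (r i)) * D r := expand
    _ ≤ ∑ r ∈ Fintype.piFinset (fun _ : Fin k => F), T r :=
        Finset.sum_le_sum fun r _ => key r
    _ = L^2 * ∑ r ∈ Fintype.piFinset (fun _ : Fin k => F), ∑ σ : Equiv.Perm (Fin k),
          ∏ i, (|b i (r i)| * |b (σ⁻¹ i) (r i)|) := by
        simp only [hT]
        rw [Finset.mul_sum]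
        refine Finset.sum_congr rfl fun r _ => ?_
        congr 1
        exact Finset.sum_congr rfl fun σ _ => (Finset.prod_mul_distrib).symm
    _ = L^2 * ∑ σ : Equiv.Perm (Fin k), ∑ r ∈ Fintype.piFinset (fun _ : Fin k => F),
          ∏ i, (|b i (r i)| * |b (σ⁻¹ i) (r i)|) := by
        rw [Finset.sum_comm]
    _ ≤ L^2 * ∑ σ : Equiv.Perm (Fin k), (1:ℝ) := by
        refine mul_le_mul_of_nonneg_left (Finset.sum_le_sum fun σ _ => ?_) (sq_nonneg L)
        have hps := Finset.prod_univ_sum (fun _ : Fin k => F)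
          (fun i m => |b i m| * |b (σ⁻¹ i) m|)
        rw [← hps]
        refine Finset.prod_le_one (fun i _ => Finset.sum_nonneg fun m _ => by positivity)
          (fun i _ => ?_)
        have cs := Finset.sum_mul_sq_le_sq_mul_sq F (fun m => |b i m|) (fun m => |b (σ⁻¹ i) m|)
        simp only [sq_abs] at cs
        have h1 := hb i
        have h2 := hb (σ⁻¹ i)
        have hnn : (0:ℝ) ≤ ∑ m ∈ F, |b i m| * |b (σ⁻¹ i) m| :=
          Finset.sum_nonneg fun m _ => by positivity
        have hs1 : (0:ℝ) ≤ ∑ m ∈ F, (b i m)^2 := Finset.sum_nonneg fun m _ => sq_nonneg _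
        have hs2 : (0:ℝ) ≤ ∑ m ∈ F, (b (σ⁻¹ i) m)^2 := Finset.sum_nonneg fun m _ => sq_nonneg _
        nlinarith [cs, h1, h2, hnn, hs1, hs2]
    _ = (k.factorial : ℝ) * L^2 := by
        rw [Finset.sum_const, Finset.card_univ, Fintype.card_perm, Fintype.card_fin,
          nsmul_eq_mul, mul_one, mul_comm]

/-- If the vectors are linearly dependent, the Gram determinant vanishes. -/
lemma vol0_eq_zero_of_not_linearIndependent {H : Type} [NormedAddCommGroup H]
    [InnerProductSpace ℝ H] {k : ℕ} (y : Fin k → H)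
    (h : ¬ LinearIndependent ℝ y) : vol0 y = 0 := by
  obtain ⟨g, hg0, i0, hgi⟩ := Fintype.not_linearIndependent_iff.mp h
  have hM : (Matrix.of fun i j => (⟪y i, y j⟫ : ℝ)).mulVec g = 0 := by
    funext i
    simp only [Matrix.mulVec, dotProduct, Matrix.of_apply, Pi.zero_apply]
    have : ∑ j, (⟪y i, y j⟫ : ℝ) * g j = ⟪y i, ∑ j, g j • y j⟫ := by
      rw [inner_sum]
      refine Finset.sum_congr rfl fun j _ => ?_
      rw [real_inner_smul_right]; ring
    rw [this, hg0, inner_zero_right]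
  have hdet : (Matrix.of fun i j => (⟪y i, y j⟫ : ℝ)).det = 0 := by
    rw [← Matrix.exists_mulVec_eq_zero_iff]
    refine ⟨g, ?_, hM⟩
    intro hg
    exact hgi (by rw [hg]; rfl)
  rw [vol0, hdet, Real.sqrt_zero]

/-- A coordinate of a point of the ellipsoid vanishes whenever the corresponding
length is zero. -/
lemma coord_eq_zero {H : Type} [NormedAddCommGroup H] [InnerProductSpace ℝ H]
    (B : CenteredEllipsoid H) {x : H} (hx : x ∈ B.set) {m : B.ι} (h0 : B.ℓ m = 0) :
    (⟪x, B.ω m⟫ : ℝ) = 0 := by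
  by_contra hne
  have h1 : ((‖(⟪x, B.ω m⟫ : ℝ)‖₊ : ℝ≥0∞)) ^ 2 / (B.ℓ m) ^ 2 ≤ 1 :=
    le_trans (ENNReal.le_tsum m) hx
  have h2 : ((‖(⟪x, B.ω m⟫ : ℝ)‖₊ : ℝ≥0∞)) ^ 2 ≠ 0 := by
    refine pow_ne_zero _ ?_
    simpa using hne
  rw [h0, zero_pow (by norm_num), ENNReal.div_zero h2] at h1
  exact absurd h1 (by simp)

end Aux

theorem stmt5 (k : ℕ) (hk : 0 < k) :
    ∃ C : ℝ, 0 < C ∧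
      ∀ (H : Type) [NormedAddCommGroup H] [InnerProductSpace ℝ H]
        [CompleteSpace H] [SecondCountableTopology H]
        (B : CenteredEllipsoid H), B.content k ≠ ∞ →
        ∀ y : Fin k → H, (∀ i, y i ∈ B.set) →
          vol0 y ≤ C * (B.content k).toReal := by
  classical
  refine ⟨(k.factorial : ℝ), by exact_mod_cast k.factorial_pos, ?_⟩
  intro H _ _ _ _ B hfin y hy
  by_cases hinf : ∃ m, B.ℓ m = ∞
  · -- degenerate case: some length is infinite, so the ellipsoid is low-dimensional
    obtain ⟨minf, hminf⟩ := hinf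
    have hbig : ∀ t : Finset B.ι, (∀ m ∈ t, B.ℓ m ≠ 0) → t.card < k := by
      intro t h0
      by_contra hge
      push_neg at hge
      have h1 : k - 1 ≤ (t.erase minf).card := by
        have := Finset.pred_card_le_card_erase (s := t) (a := minf)
        omega
      obtain ⟨u, hu_sub, hu_card⟩ := Finset.exists_subset_card_eq h1
      have hmu : minf ∉ u := fun h => (Finset.mem_erase.mp (hu_sub h)).1 rfl
      have hm_mem : minf ∈ insert minf u := Finset.mem_insert_self _ _
      have hcard' : (insert minf u).card = k := by
        rw [Finset.card_insert_of_notMem hmu, hu_card]; omega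
      have h0' : ∀ m ∈ insert minf u, B.ℓ m ≠ 0 := by
        intro m hm
        rcases Finset.mem_insert.mp hm with rfl | hm
        · rw [hminf]; exact ENNReal.top_ne_zero
        · exact h0 m (Finset.mem_of_mem_erase (hu_sub hm))
      have hprodtop : ∏ m ∈ insert minf u, B.ℓ m = ∞ := by
        rw [← Finset.prod_erase_mul _ _ hm_mem, hminf]
        refine ENNReal.mul_top ?_
        rw [Finset.prod_ne_zero_iff]
        exact fun m hm => h0' m (Finset.mem_of_mem_erase hm)
      have e : ↥(insert minf u) ≃ Fin k :=
        Fintype.equivFinOfCardEq (by rw [Fintype.card_coe]; exact hcard')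
      have htop : B.content k = ∞ := by
        refine top_unique ?_
        have hle := le_iSup (fun s : Fin k ↪ B.ι => ∏ j, B.ℓ (s j))
          (e.symm.toEmbedding.trans (Function.Embedding.subtype _))
        refine le_trans (le_of_eq ?_) hle
        simp only [Function.Embedding.trans_apply, Equiv.coe_toEmbedding,
          Function.Embedding.coe_subtype]
        rw [Equiv.prod_comp e.symm (fun x : ↥(insert minf u) => B.ℓ ↑x)]
        rw [Finset.prod_coe_sort]
        exact hprodtop.symm
      exact hfin htop
    have hSfin : {m : B.ι | B.ℓ m ≠ 0}.Finite := by
      by_contra hSinf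
      obtain ⟨t, hts, htc⟩ := Set.Infinite.exists_subset_card_eq hSinf k
      have := hbig t fun m hm => hts hm
      omega
    have hs₀card : hSfin.toFinset.card < k :=
      hbig hSfin.toFinset (fun m hm => (Set.Finite.mem_toFinset hSfin).mp hm)
    have hyV : ∀ i, y i ∈ Submodule.span ℝ ((hSfin.toFinset.image B.ω : Finset H) : Set H) := by
      intro i
      have hz : y i = ∑ m ∈ hSfin.toFinset, (⟪y i, B.ω m⟫ : ℝ) • B.ω m := by
        have hcoord : ∀ m : B.ι,
            (⟪y i - ∑ m' ∈ hSfin.toFinset, (⟪y i, B.ω m'⟫ : ℝ) • B.ω m', B.ω m⟫ : ℝ) = 0 := by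
          intro m
          rw [inner_sub_left, sum_inner]
          have hsum : ∑ m' ∈ hSfin.toFinset, (⟪(⟪y i, B.ω m'⟫ : ℝ) • B.ω m', B.ω m⟫ : ℝ)
              = if m ∈ hSfin.toFinset then (⟪y i, B.ω m⟫ : ℝ) else 0 := by
            rw [← Finset.sum_ite_eq' hSfin.toFinset m (fun m' => (⟪y i, B.ω m'⟫ : ℝ))]
            refine Finset.sum_congr rfl fun m' _ => ?_
            rw [real_inner_smul_left, orthonormal_iff_ite.mp B.orth m' m]
            by_cases h : m' = m <;> simp [h]
          rw [hsum]
          by_cases hm : m ∈ hSfin.toFinset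
          · simp [hm]
          · have h0 : B.ℓ m = 0 := by
              by_contra h0
              exact hm ((Set.Finite.mem_toFinset hSfin).mpr h0)
            rw [coord_eq_zero B (hy i) h0]
            simp [hm]
        have horto : (y i - ∑ m' ∈ hSfin.toFinset, (⟪y i, B.ω m'⟫ : ℝ) • B.ω m')
            ∈ (Submodule.span ℝ (Set.range B.ω))ᗮ := by
          rw [Submodule.mem_orthogonal']
          intro u hu
          induction hu using Submodule.span_induction with
          | mem u hu =>
              obtain ⟨m, rfl⟩ := hu
              exact hcoord m
          | zero => rw [inner_zero_right]
          | add u v _ _ h1 h2 => rw [inner_add_right, h1, h2, add_zero]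
          | smul c u _ h1 => rw [real_inner_smul_right, h1, mul_zero]
        have hbot : (Submodule.span ℝ (Set.range B.ω))ᗮ = ⊥ :=
          (Submodule.topologicalClosure_eq_top_iff).mp B.dense_span
        rw [hbot, Submodule.mem_bot, sub_eq_zero] at horto
        exact horto
      rw [hz]
      refine Submodule.sum_mem _ fun m hm => Submodule.smul_mem _ _ ?_
      exact Submodule.subset_span (by
        simp only [Finset.coe_image, Set.mem_image, Finset.mem_coe]
        exact ⟨m, hm, rfl⟩)
    have hnli : ¬ LinearIndependent ℝ y := by
      intro hli
      have hli' : LinearIndependent ℝ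
          (fun i => (⟨y i, hyV i⟩ :
            Submodule.span ℝ ((hSfin.toFinset.image B.ω : Finset H) : Set H))) := by
        exact LinearIndependent.of_comp
          (Submodule.span ℝ ((hSfin.toFinset.image B.ω : Finset H) : Set H)).subtype hli
      have h1 := hli'.fintype_card_le_finrank
      have h2 := finrank_span_finset_le_card (R := ℝ) (hSfin.toFinset.image B.ω)
      have h3 := Finset.card_image_le (s := hSfin.toFinset) (f := B.ω)
      rw [Set.finrank] at h2
      simp only [Fintype.card_fin] at h1
      omega
    rw [vol0_eq_zero_of_not_linearIndependent y hnli]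
    positivity
  · -- main case: all lengths are finite
    push_neg at hinf
    have hL : (0:ℝ) ≤ (B.content k).toReal := ENNReal.toReal_nonneg
    set a : Fin k → B.ι → ℝ := fun i m => ⟪y i, B.ω m⟫ with ha
    set ℓr : B.ι → ℝ := fun m => (B.ℓ m).toReal with hℓr
    set b : Fin k → B.ι → ℝ := fun i m => if B.ℓ m = 0 then 0 else a i m / ℓr m with hbdef
    have hab : ∀ i m, a i m = ℓr m * b i m := by
      intro i m
      by_cases h0 : B.ℓ m = 0
      · have hz : a i m = 0 := coord_eq_zero B (hy i) h0
        simp [hbdef, h0, hz]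
      · have hne : ℓr m ≠ 0 := by
          simp only [hℓr]
          rw [ENNReal.toReal_ne_zero]
          exact ⟨h0, hinf m⟩
        rw [hbdef]
        simp only [h0, if_false]
        field_simp
    have hbsum : ∀ (F : Finset B.ι) (i : Fin k), ∑ m ∈ F, (b i m)^2 ≤ 1 := by
      intro F i
      have hterm : ∀ m, (b i m)^2
          = (((‖(⟪y i, B.ω m⟫ : ℝ)‖₊ : ℝ≥0∞)) ^ 2 / (B.ℓ m) ^ 2).toReal := by
        intro m
        by_cases h0 : B.ℓ m = 0
        · have hz : (⟪y i, B.ω m⟫ : ℝ) = 0 := coord_eq_zero B (hy i) h0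
          simp [hbdef, h0, hz]
        · rw [ENNReal.toReal_div]
          have h2 : ((((‖(⟪y i, B.ω m⟫ : ℝ)‖₊ : ℝ≥0∞)) ^ 2).toReal) = (a i m)^2 := by
            rw [ENNReal.toReal_pow, ENNReal.coe_toReal, coe_nnnorm, Real.norm_eq_abs, sq_abs, ha]
          have h3 : (((B.ℓ m) ^ 2).toReal) = (ℓr m)^2 := by
            rw [ENNReal.toReal_pow, hℓr]
          rw [h2, h3, hbdef]
          simp only [h0, if_false]
          rw [div_pow]
      have hne : ∀ m ∈ F, ((‖(⟪y i, B.ω m⟫ : ℝ)‖₊ : ℝ≥0∞)) ^ 2 / (B.ℓ m) ^ 2 ≠ ∞ := by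
        intro m _
        by_cases h0 : B.ℓ m = 0
        · rw [coord_eq_zero B (hy i) h0]
          simp
        · exact (ENNReal.div_lt_top (by simp) (pow_ne_zero _ h0)).ne
      calc ∑ m ∈ F, (b i m)^2
          = (∑ m ∈ F, ((‖(⟪y i, B.ω m⟫ : ℝ)‖₊ : ℝ≥0∞)) ^ 2 / (B.ℓ m) ^ 2).toReal := by
            rw [ENNReal.toReal_sum hne]
            exact Finset.sum_congr rfl fun m _ => hterm m
        _ ≤ (1 : ℝ≥0∞).toReal :=
            ENNReal.toReal_mono (by simp) (le_trans (ENNReal.sum_le_tsum F) (hy i))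
        _ = 1 := by simp
    have hprod : ∀ g : Fin k → B.ι, Function.Injective g →
        (∏ j, ℓr (g j)) ≤ (B.content k).toReal := by
      intro g hg
      simp only [hℓr]
      calc ∏ j, (B.ℓ (g j)).toReal = (∏ j, B.ℓ (g j)).toReal := (ENNReal.toReal_prod _ _).symm
        _ ≤ (B.content k).toReal :=
            ENNReal.toReal_mono hfin
              (le_iSup (fun s : Fin k ↪ B.ι => ∏ j, B.ℓ (s j)) ⟨g, hg⟩)
    have hGtend : Filter.Tendsto
        (fun F : Finset B.ι => Matrix.det (Matrix.of fun i j => ∑ m ∈ F, a i m * a j m))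
        Filter.atTop (nhds (Matrix.det (Matrix.of fun i j => (⟪y i, y j⟫ : ℝ)))) := by
      have hmat : Filter.Tendsto
          (fun F : Finset B.ι => (Matrix.of fun i j => ∑ m ∈ F, a i m * a j m))
          Filter.atTop (nhds (Matrix.of fun i j => (⟪y i, y j⟫ : ℝ))) := by
        refine tendsto_pi_nhds.mpr ?_
        intro i
        rw [tendsto_pi_nhds]
        intro j
        have hsum : HasSum (fun m => a i m * a j m) (⟪y i, y j⟫ : ℝ) := by
          have h := (HilbertBasis.mk B.orth
            (le_of_eq B.dense_span.symm)).hasSum_inner_mul_inner (y i) (y j)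
          rw [HilbertBasis.coe_mk] at h
          have heq : (fun m => a i m * a j m)
              = fun m => (⟪y i, B.ω m⟫ : ℝ) * ⟪B.ω m, y j⟫ := by
            funext m
            simp only [ha]
            rw [real_inner_comm (B.ω m) (y j)]
          rw [heq]
          exact h
        exact hsum
      exact ((Continuous.matrix_det continuous_id).tendsto _).comp hmat
    have hdet : Matrix.det (Matrix.of fun i j => (⟪y i, y j⟫ : ℝ))
        ≤ (k.factorial : ℝ) * ((B.content k).toReal)^2 :=
      le_of_tendsto hGtend (Filter.Eventually.of_forall fun F =>
        finite_core F a b ℓr ((B.content k).toReal) hL hab (fun i => hbsum F i) hprod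
          (fun m => ENNReal.toReal_nonneg))
    rw [vol0]
    calc Real.sqrt (Matrix.det (Matrix.of fun i j => (⟪y i, y j⟫ : ℝ)))
        ≤ Real.sqrt ((k.factorial : ℝ) * ((B.content k).toReal)^2) := Real.sqrt_le_sqrt hdet
      _ = Real.sqrt (k.factorial : ℝ) * (B.content k).toReal := by
          rw [Real.sqrt_mul (by positivity), Real.sqrt_sq hL]
      _ ≤ (k.factorial : ℝ) * (B.content k).toReal := by
          refine mul_le_mul_of_nonneg_right ?_ hL
          have h1 : (1:ℝ) ≤ (k.factorial : ℝ) := by exact_mod_cast k.factorial_pos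
          nlinarith [Real.sq_sqrt (le_trans zero_le_one h1),
            Real.sqrt_nonneg ((k.factorial : ℝ))]
end

section
/- Let Q be a d × d real matrix and let |Q|_k denote the reciprocal of the product of the k smallest eigenvalues of (Q*Q)^{1/2}. Then there is a constant C_k such that for all y_1, …, y_k ∈ ℝ^d, det(0, y_1, …, y_k) ≤ C_k |Q|_k ∏_{j=1}^k ‖Q y_j‖. -/
open MeasureTheory
open scoped ENNReal BigOperators RealInnerProductSpace

/-- `|Q|_k`: the reciprocal of the product of the `k` smallest singular values of `Q`,
i.e. of the `k` smallest eigenvalues of `(Q*Q)^{1/2}`.  Since all singular values of an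
invertible `Q` are positive, the product of the `k` smallest equals the infimum over
choices of `k` distinct indices of the product of the selected singular values. -/
noncomputable def QkInv (d k : ℕ) (Q : Matrix (Fin d) (Fin d) ℝ) : ℝ :=
  (⨅ s : Fin k ↪ Fin d, ∏ j, Real.sqrt
      ((Matrix.posSemidef_conjTranspose_mul_self Q).isHermitian.eigenvalues (s j)))⁻¹

section AuxStmt6

open Finset Matrix Equiv

lemma det_mul_expand {R : Type*} [CommRing R] {k d : ℕ}
    (A : Matrix (Fin k) (Fin d) R) (B : Matrix (Fin d) (Fin k) R) :
    (A * B).det = ∑ p : Fin k → Fin d, (∏ i, B (p i) i) * (A.submatrix id p).det := by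
  calc (A * B).det
      = ∑ σ : Perm (Fin k), ((Perm.sign σ : ℤ) : R) * ∏ i, ∑ j, A (σ i) j * B j i := by
        simp [Matrix.det_apply', Matrix.mul_apply]
    _ = ∑ σ : Perm (Fin k), ∑ p : Fin k → Fin d,
          ((Perm.sign σ : ℤ) : R) * ∏ i, A (σ i) (p i) * B (p i) i := by
        simp only [prod_univ_sum, mul_sum, Fintype.piFinset_univ]
    _ = ∑ p : Fin k → Fin d, ∑ σ : Perm (Fin k),
          ((Perm.sign σ : ℤ) : R) * ∏ i, A (σ i) (p i) * B (p i) i := Finset.sum_comm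
    _ = ∑ p : Fin k → Fin d, (∏ i, B (p i) i) * (A.submatrix id p).det := by
        refine Finset.sum_congr rfl fun p _ => ?_
        rw [Matrix.det_apply', Finset.mul_sum]
        refine Finset.sum_congr rfl fun σ _ => ?_
        simp only [Matrix.submatrix_apply, id_eq, Finset.prod_mul_distrib]
        ring

lemma det_submatrix_comp_zero {R : Type*} [CommRing R] {k d : ℕ}
    (A : Matrix (Fin k) (Fin d) R) {p : Fin k → Fin d} (hp : ¬ Function.Injective p) :
    (A.submatrix id p).det = 0 := by
  rw [← Matrix.det_transpose]
  rw [Function.not_injective_iff] at hp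
  obtain ⟨i, j, hij, hne⟩ := hp
  refine Matrix.det_zero_of_row_eq hne ?_
  funext l
  simp [Matrix.transpose_apply, hij]

lemma sum_fn_eq_sum_emb {M : Type*} [AddCommMonoid M] {k d : ℕ}
    (F : (Fin k → Fin d) → M) (hF : ∀ p, ¬ Function.Injective p → F p = 0) :
    ∑ p : Fin k → Fin d, F p = ∑ e : Fin k ↪ Fin d, F ⇑e := by
  classical
  calc ∑ p : Fin k → Fin d, F p
      = ∑ p ∈ Finset.univ.filter (fun p => Function.Injective p), F p :=
        (Finset.sum_filter_of_ne (fun p _ h => by by_contra hinj; exact h (hF p hinj))).symm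
    _ = ∑ p : {p : Fin k → Fin d // Function.Injective p}, F p.1 :=
        Finset.sum_subtype _ (fun p => by simp) F
    _ = ∑ e : Fin k ↪ Fin d, F ⇑e :=
        Fintype.sum_equiv (Equiv.subtypeInjectiveEquivEmbedding (Fin k) (Fin d))
          _ _ (fun x => rfl)

lemma key_identity {k d : ℕ} (w : Fin d → ℝ) (Z : Matrix (Fin d) (Fin k) ℝ) :
    (k.factorial : ℝ) * (Zᵀ * (Matrix.diagonal w * Z)).det
      = ∑ e : Fin k ↪ Fin d, (∏ j, w (e j)) * ((Z.submatrix (⇑e) id).det) ^ 2 := by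
  classical
  set F : (Fin k → Fin d) → ℝ :=
    fun p => (∏ i, w (p i) * Z (p i) i) * (Zᵀ.submatrix id p).det with hFdef
  have hstep1 : (Zᵀ * (Matrix.diagonal w * Z)).det = ∑ e : Fin k ↪ Fin d, F ⇑e := by
    rw [det_mul_expand]
    rw [show (∑ p : Fin k → Fin d, (∏ i, (Matrix.diagonal w * Z) (p i) i)
          * (Zᵀ.submatrix id p).det) = ∑ p : Fin k → Fin d, F p from by
      refine Finset.sum_congr rfl fun p _ => ?_
      simp [hFdef, Matrix.diagonal_mul]]
    exact sum_fn_eq_sum_emb F fun p hp => by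
      simp [hFdef, det_submatrix_comp_zero Zᵀ hp]
  -- permutation invariance
  have hperm : ∀ σ : Equiv.Perm (Fin k),
      ∑ e : Fin k ↪ Fin d, F (⇑e ∘ ⇑σ) = ∑ e : Fin k ↪ Fin d, F ⇑e := by
    intro σ
    refine Fintype.sum_equiv (Equiv.embeddingCongr σ.symm (Equiv.refl (Fin d))) _ _ fun e => ?_
    congr 1
  -- inner sum over permutations for fixed e
  have hinner : ∀ e : Fin k ↪ Fin d,
      ∑ σ : Equiv.Perm (Fin k), F (⇑e ∘ ⇑σ)
        = (∏ j, w (e j)) * ((Z.submatrix (⇑e) id).det) ^ 2 := by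
    intro e
    have hdet2 : ∀ σ : Equiv.Perm (Fin k),
        (Zᵀ.submatrix id (⇑e ∘ ⇑σ)).det
          = ((Equiv.Perm.sign σ : ℤ) : ℝ) * (Z.submatrix (⇑e) id).det := by
      intro σ
      have : Zᵀ.submatrix id (⇑e ∘ ⇑σ) = (Zᵀ.submatrix id ⇑e).submatrix id ⇑σ := by
        rw [Matrix.submatrix_submatrix]; rfl
      rw [this, Matrix.det_permute']
      congr 1
      rw [← Matrix.det_transpose, Matrix.transpose_submatrix, Matrix.transpose_transpose]
    calc ∑ σ : Equiv.Perm (Fin k), F (⇑e ∘ ⇑σ)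
        = (∏ j, w (e j)) * ∑ σ : Equiv.Perm (Fin k),
            ((Equiv.Perm.sign σ : ℤ) : ℝ) * (∏ i, Z (e (σ i)) i) * (Z.submatrix (⇑e) id).det := by
          rw [Finset.mul_sum]
          refine Finset.sum_congr rfl fun σ _ => ?_
          simp only [hFdef, Function.comp_apply, Finset.prod_mul_distrib, hdet2 σ]
          rw [show (∏ i, w (e (σ i))) = ∏ j, w (e j) from Equiv.prod_comp σ fun i => w (e i)]
          ring
      _ = (∏ j, w (e j)) * ((Z.submatrix (⇑e) id).det) ^ 2 := by
          rw [← Finset.sum_mul]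
          congr 1
          rw [sq]
          congr 1
          rw [Matrix.det_apply']
          rfl
  calc (k.factorial : ℝ) * (Zᵀ * (Matrix.diagonal w * Z)).det
      = ∑ σ : Equiv.Perm (Fin k), ∑ e : Fin k ↪ Fin d, F ⇑e := by
        rw [hstep1, Finset.sum_const, Finset.card_univ, Fintype.card_perm, Fintype.card_fin, nsmul_eq_mul]
    _ = ∑ σ : Equiv.Perm (Fin k), ∑ e : Fin k ↪ Fin d, F (⇑e ∘ ⇑σ) := by
        exact Finset.sum_congr rfl fun σ _ => (hperm σ).symm
    _ = ∑ e : Fin k ↪ Fin d, ∑ σ : Equiv.Perm (Fin k), F (⇑e ∘ ⇑σ) := Finset.sum_comm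
    _ = ∑ e : Fin k ↪ Fin d, (∏ j, w (e j)) * ((Z.submatrix (⇑e) id).det) ^ 2 :=
        Finset.sum_congr rfl fun e _ => hinner e

lemma det_gram_le {k d : ℕ} (hkd : k ≤ d) (w : Fin d → ℝ) (hw : ∀ i, 0 ≤ w i)
    (Z : Matrix (Fin d) (Fin k) ℝ) :
    (⨅ e : Fin k ↪ Fin d, ∏ j, w (e j)) * (Zᵀ * Z).det
      ≤ (Zᵀ * (Matrix.diagonal w * Z)).det := by
  have hne : Nonempty (Fin k ↪ Fin d) := ⟨Fin.castLEEmb hkd⟩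
  set m : ℝ := ⨅ e : Fin k ↪ Fin d, ∏ j, w (e j) with hm
  have hbdd : BddBelow (Set.range fun e : Fin k ↪ Fin d => ∏ j, w (e j)) :=
    (Set.finite_range _).bddBelow
  have hmle : ∀ e : Fin k ↪ Fin d, m ≤ ∏ j, w (e j) := fun e => ciInf_le hbdd e
  have h1 : (k.factorial : ℝ) * (Zᵀ * Z).det
      = ∑ e : Fin k ↪ Fin d, ((Z.submatrix (⇑e) id).det) ^ 2 := by
    have := key_identity (fun _ => 1) Z
    simpa using this
  have h2 := key_identity w Z
  have hfac : (0 : ℝ) < (k.factorial : ℝ) := by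
    exact_mod_cast Nat.factorial_pos k
  refine le_of_mul_le_mul_left ?_ hfac
  calc (k.factorial : ℝ) * (m * (Zᵀ * Z).det)
      = m * ((k.factorial : ℝ) * (Zᵀ * Z).det) := by ring
    _ = m * ∑ e : Fin k ↪ Fin d, ((Z.submatrix (⇑e) id).det) ^ 2 := by rw [h1]
    _ = ∑ e : Fin k ↪ Fin d, m * ((Z.submatrix (⇑e) id).det) ^ 2 := Finset.mul_sum _ _ _
    _ ≤ ∑ e : Fin k ↪ Fin d, (∏ j, w (e j)) * ((Z.submatrix (⇑e) id).det) ^ 2 :=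
        Finset.sum_le_sum fun e _ => mul_le_mul_of_nonneg_right (hmle e) (sq_nonneg _)
    _ = (k.factorial : ℝ) * (Zᵀ * (Matrix.diagonal w * Z)).det := h2.symm

lemma amgm_le_one {k : ℕ} (hk : 0 < k) (μ : Fin k → ℝ) (h0 : ∀ i, 0 ≤ μ i)
    (hsum : ∑ i, μ i ≤ k) : ∏ i, μ i ≤ 1 := by
  have hw : ∀ i ∈ (Finset.univ : Finset (Fin k)), (0:ℝ) ≤ (k:ℝ)⁻¹ :=
    fun i _ => inv_nonneg.mpr (Nat.cast_nonneg k)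
  have hk' : (0:ℝ) < k := by exact_mod_cast hk
  have hw' : ∑ _i : Fin k, (k:ℝ)⁻¹ = 1 := by
    simp [Finset.sum_const, Finset.card_univ]
    field_simp
  have h := Real.geom_mean_le_arith_mean_weighted (s := Finset.univ) (fun _ => (k:ℝ)⁻¹) μ hw hw'
    (fun i _ => h0 i)
  -- h : ∏ i, μ i ^ (k:ℝ)⁻¹ ≤ ∑ i, (k:ℝ)⁻¹ * μ i
  have hrhs : ∑ i, (k:ℝ)⁻¹ * μ i ≤ 1 := by
    rw [← Finset.mul_sum]
    rw [inv_mul_le_iff₀ hk']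
    linarith
  have hle : ∏ i, μ i ^ ((k:ℝ)⁻¹) ≤ 1 := h.trans hrhs
  have hpow := pow_le_pow_left₀ (Finset.prod_nonneg fun i _ => Real.rpow_nonneg (h0 i) _) hle k
  rw [one_pow, ← Finset.prod_pow] at hpow
  calc ∏ i, μ i = ∏ i, (μ i ^ ((k:ℝ)⁻¹)) ^ k := by
        refine Finset.prod_congr rfl fun i _ => ?_
        rw [← Real.rpow_natCast (μ i ^ ((k:ℝ)⁻¹)) k, ← Real.rpow_mul (h0 i),
          inv_mul_cancel₀ (ne_of_gt hk'), Real.rpow_one]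
    _ ≤ 1 := hpow

lemma hadamard_psd {k : ℕ} (hk : 0 < k) {G : Matrix (Fin k) (Fin k) ℝ}
    (hG : G.PosSemidef) : G.det ≤ ∏ i, G i i := by
  classical
  have hdiag : ∀ i, 0 ≤ G i i := by
    intro i
    exact hG.diag_nonneg
  by_cases hdet : G.det ≤ 0
  · exact hdet.trans (Finset.prod_nonneg fun i _ => hdiag i)
  push_neg at hdet
  have hdiagpos : ∀ i, 0 < G i i := by
    intro i
    rcases lt_or_eq_of_le (hdiag i) with h | h
    · exact h
    exfalso
    have hzero : G *ᵥ Pi.single i 1 = 0 := by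
      rw [← (hG.dotProduct_mulVec_zero_iff (Pi.single i 1))]
      simpa [dotProduct, Matrix.mulVec, Pi.single_apply] using h.symm
    have hcol : ∀ j, G j i = 0 := by
      intro j
      have := congrFun hzero j
      simpa [Matrix.mulVec, dotProduct, Pi.single_apply] using this
    exact absurd (Matrix.det_eq_zero_of_column_eq_zero i hcol) (ne_of_gt hdet)
  set dg : Fin k → ℝ := fun i => (Real.sqrt (G i i))⁻¹ with hdg
  have hdpos : ∀ i, 0 < dg i := fun i => inv_pos.mpr (Real.sqrt_pos.mpr (hdiagpos i))
  set H : Matrix (Fin k) (Fin k) ℝ := Matrix.diagonal dg * G * Matrix.diagonal dg with hH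
  have hHpsd : H.PosSemidef := by
    have hstar : (Matrix.diagonal dg)ᴴ = Matrix.diagonal dg := by
      simp [Matrix.diagonal_conjTranspose]
    have := hG.mul_mul_conjTranspose_same (Matrix.diagonal dg)
    rwa [hstar] at this
  have hHdiag : ∀ i, H i i = 1 := by
    intro i
    have : H i i = dg i * G i i * dg i := by
      simp [hH, Matrix.mul_diagonal, Matrix.diagonal_mul]
    have hs : Real.sqrt (G i i) * Real.sqrt (G i i) = G i i :=
      Real.mul_self_sqrt (hdiag i)
    have h4 : dg i * G i i * dg i = (Real.sqrt (G i i) * Real.sqrt (G i i))⁻¹ * G i i := by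
      rw [hdg]; ring
    rw [this, h4, hs]
    exact inv_mul_cancel₀ (ne_of_gt (hdiagpos i))
  set μ := hHpsd.isHermitian.eigenvalues with hμ
  have hμ0 : ∀ i, 0 ≤ μ i := fun i => hHpsd.eigenvalues_nonneg i
  have hofReal : ((RCLike.ofReal ∘ μ : Fin k → ℝ)) = μ := by
    funext i; simp [RCLike.ofReal_real_eq_id]
  have htrace : ∑ i, μ i = (k : ℝ) := by
    have hspec := hHpsd.isHermitian.spectral_theorem
    have hunit : (star (hHpsd.isHermitian.eigenvectorUnitary : Matrix (Fin k) (Fin k) ℝ)) *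
        (hHpsd.isHermitian.eigenvectorUnitary : Matrix (Fin k) (Fin k) ℝ) = 1 :=
      Matrix.mem_unitaryGroup_iff'.mp (hHpsd.isHermitian.eigenvectorUnitary).2
    have h1 : H.trace = (Matrix.diagonal (RCLike.ofReal ∘ μ)).trace := by
      conv_lhs => rw [hspec]
      rw [Unitary.conjStarAlgAut_apply, Matrix.trace_mul_comm, ← Matrix.mul_assoc, hunit, Matrix.one_mul]
    rw [hofReal] at h1
    rw [Matrix.trace_diagonal] at h1
    have h2 : H.trace = ∑ i, H i i := rfl
    rw [h2] at h1
    rw [← h1]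
    simp [hHdiag]
  have hdetH : H.det = ∏ i, μ i := by
    have := hHpsd.isHermitian.det_eq_prod_eigenvalues
    simpa [hofReal] using this
  have hdetH1 : H.det ≤ 1 := by
    rw [hdetH]
    exact amgm_le_one hk μ hμ0 (le_of_eq htrace)
  set P : ℝ := ∏ i, Real.sqrt (G i i) with hP
  have hPpos : 0 < P := Finset.prod_pos fun i _ => Real.sqrt_pos.mpr (hdiagpos i)
  have hPsq : P ^ 2 = ∏ i, G i i := by
    rw [hP, ← Finset.prod_pow]
    exact Finset.prod_congr rfl fun i _ => Real.sq_sqrt (hdiag i)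
  have hdetH2 : H.det = P⁻¹ * G.det * P⁻¹ := by
    rw [hH, Matrix.det_mul, Matrix.det_mul, Matrix.det_diagonal]
    rw [show (∏ i, dg i) = P⁻¹ from by rw [hdg, hP, ← Finset.prod_inv_distrib]]
  have h3 : G.det = P * H.det * P := by
    rw [hdetH2]
    field_simp
  calc G.det = P * H.det * P := h3
    _ ≤ P * 1 * P := by nlinarith [hdetH1, hPpos]
    _ = ∏ i, G i i := by rw [mul_one, ← hPsq]; ring

lemma sqrt_prod {ι : Type*} (s : Finset ι) (f : ι → ℝ) (h : ∀ i, 0 ≤ f i) :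
    Real.sqrt (∏ i ∈ s, f i) = ∏ i ∈ s, Real.sqrt (f i) := by
  classical
  induction s using Finset.cons_induction with
  | empty => simp
  | cons a s ha ih => rw [Finset.prod_cons, Finset.prod_cons, Real.sqrt_mul (h a), ih]

end AuxStmt6

open Finset Matrix Equiv

theorem stmt6 (k : ℕ) (hk : 0 < k) :
    ∃ C : ℝ, 0 < C ∧
      ∀ (d : ℕ), k ≤ d →
        ∀ (Q : Matrix (Fin d) (Fin d) ℝ), IsUnit Q.det →
          ∀ y : Fin k → EuclideanSpace ℝ (Fin d),
            vol0 y ≤ C * QkInv d k Q *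
              ∏ j, ‖(show EuclideanSpace ℝ (Fin d) from WithLp.toLp 2 (Q.mulVec (y j)))‖ := by
  classical
  refine ⟨1, one_pos, ?_⟩
  intro d hkd Q hQ y
  have hM : (Qᴴ * Q).PosSemidef := Matrix.posSemidef_conjTranspose_mul_self Q
  set lam : Fin d → ℝ := hM.isHermitian.eigenvalues with hlam
  -- eigenvalues are positive
  have hdetQ : Q.det ≠ 0 := by
    simpa [isUnit_iff_ne_zero] using hQ
  have hdetM : (Qᴴ * Q).det ≠ 0 := by
    rw [Matrix.det_mul, Matrix.det_conjTranspose]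
    simpa using mul_ne_zero hdetQ hdetQ
  have hprodlam : ∏ i, lam i = (Qᴴ * Q).det := by
    have := hM.isHermitian.det_eq_prod_eigenvalues
    simp only [RCLike.ofReal_real_eq_id, id_eq] at this
    exact this.symm
  have hlampos : ∀ i, 0 < lam i := by
    intro i
    rcases (hM.eigenvalues_nonneg i).lt_or_eq with h | h
    · exact h
    · exact absurd (hprodlam ▸ Finset.prod_eq_zero (Finset.mem_univ i) h.symm) hdetM
  haveI hne : Nonempty (Fin k ↪ Fin d) := ⟨Fin.castLEEmb hkd⟩
  set g : (Fin k ↪ Fin d) → ℝ := fun e => ∏ j, lam (e j) with hg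
  obtain ⟨e₀, he₀⟩ : ∃ e₀ : Fin k ↪ Fin d, ∀ e, g e₀ ≤ g e := by
    obtain ⟨e₀, _, h⟩ := Finset.exists_min_image Finset.univ g
      ⟨Classical.arbitrary _, Finset.mem_univ _⟩
    exact ⟨e₀, fun e => h e (Finset.mem_univ e)⟩
  set m : ℝ := g e₀ with hm
  have hmpos : 0 < m := Finset.prod_pos fun j _ => hlampos _
  have hiInf_g : (⨅ e : Fin k ↪ Fin d, ∏ j, lam (e j)) = m :=
    le_antisymm (ciInf_le ((Set.finite_range g).bddBelow) e₀) (le_ciInf he₀)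
  have hQk : QkInv d k Q = (Real.sqrt m)⁻¹ := by
    have hsqg : ∀ s : Fin k ↪ Fin d,
        (∏ j, Real.sqrt (lam (s j))) = Real.sqrt (g s) := fun s =>
      (sqrt_prod Finset.univ (fun j => lam (s j)) (fun j => (hlampos _).le)).symm
    have : (⨅ s : Fin k ↪ Fin d, ∏ j, Real.sqrt (lam (s j))) = Real.sqrt m := by
      refine le_antisymm ?_ (le_ciInf fun s => ?_)
      · exact (ciInf_le ((Set.finite_range _).bddBelow) e₀).trans_eq (hsqg e₀)
      · rw [hsqg s]
        exact Real.sqrt_le_sqrt (he₀ s)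
    rw [QkInv, this]
  -- set up matrices
  set Z : Matrix (Fin d) (Fin k) ℝ := Matrix.of fun i j => y j i with hZ
  set V : Matrix (Fin d) (Fin k) ℝ := Q * Z with hV
  have hvol : vol0 y = Real.sqrt ((Zᵀ * Z).det) := by
    unfold vol0
    have hgram : (Matrix.of fun i j => (inner ℝ (y i) (y j) : ℝ)) = Zᵀ * Z := by
      ext i j
      simp [Matrix.mul_apply, PiLp.inner_apply, RCLike.inner_apply, starRingEnd_apply, hZ, mul_comm]
    rw [hgram]
  set U : Matrix (Fin d) (Fin d) ℝ :=
    (hM.isHermitian.eigenvectorUnitary : Matrix (Fin d) (Fin d) ℝ) with hU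
  have hUU : U * star U = 1 :=
    Matrix.mem_unitaryGroup_iff.mp hM.isHermitian.eigenvectorUnitary.2
  have hspec : Qᴴ * Q = U * Matrix.diagonal lam * star U := by
    have h := hM.isHermitian.spectral_theorem
    simp only [RCLike.ofReal_real_eq_id, Function.id_comp] at h
    exact h
  set W : Matrix (Fin d) (Fin k) ℝ := star U * Z with hW
  have hWt : Wᵀ = Zᵀ * U := by
    have hsU : star U = Uᵀ := by
      rw [Matrix.star_eq_conjTranspose, Matrix.conjTranspose_eq_transpose_of_trivial]
    rw [hW, Matrix.transpose_mul, hsU, Matrix.transpose_transpose]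
  have hWW : Wᵀ * W = Zᵀ * Z := by
    rw [hWt, hW, Matrix.mul_assoc, ← Matrix.mul_assoc U (star U) Z, hUU, Matrix.one_mul]
  have hWDW : Wᵀ * (Matrix.diagonal lam * W) = Vᴴ * V := by
    rw [hWt, hW, hV, Matrix.conjTranspose_mul,
      show Zᴴ = Zᵀ from Matrix.conjTranspose_eq_transpose_of_trivial Z]
    calc Zᵀ * U * (Matrix.diagonal lam * (star U * Z))
        = Zᵀ * (U * Matrix.diagonal lam * star U) * Z := by
          simp only [Matrix.mul_assoc]
      _ = Zᵀ * (Qᴴ * Q) * Z := by rw [← hspec]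
      _ = Zᵀ * Qᴴ * (Q * Z) := by simp only [Matrix.mul_assoc]
  have hkey := det_gram_le hkd lam (fun i => (hlampos i).le) W
  rw [hiInf_g, hWW, hWDW] at hkey
  have hVpsd : (Vᴴ * V).PosSemidef := Matrix.posSemidef_conjTranspose_mul_self V
  have hhad : (Vᴴ * V).det ≤ ∏ j, (Vᴴ * V) j j := hadamard_psd hk hVpsd
  set P : ℝ := ∏ j, ‖(show EuclideanSpace ℝ (Fin d) from WithLp.toLp 2 (Q.mulVec (y j)))‖ with hPdef
  have hdiagV : ∀ j, (Vᴴ * V) j j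
      = ‖(show EuclideanSpace ℝ (Fin d) from WithLp.toLp 2 (Q.mulVec (y j)))‖ ^ 2 := by
    intro j
    have hnorm : ‖(show EuclideanSpace ℝ (Fin d) from WithLp.toLp 2 (Q.mulVec (y j)))‖ ^ 2
        = ∑ i, (Q.mulVec (y j) i) ^ 2 := by
      rw [EuclideanSpace.norm_eq, Real.sq_sqrt (Finset.sum_nonneg fun i _ => sq_nonneg _)]
      · exact Finset.sum_congr rfl fun i _ => by rw [Real.norm_eq_abs, sq_abs]
    rw [hnorm]
    simp [Matrix.mul_apply, Matrix.conjTranspose_apply, hV, hZ, Matrix.mulVec,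
      dotProduct, sq, mul_comm]
  have hP0 : (0:ℝ) ≤ P := Finset.prod_nonneg fun j _ => norm_nonneg _
  have hfinal : m * (Zᵀ * Z).det ≤ P ^ 2 := by
    refine hkey.trans (hhad.trans_eq ?_)
    rw [hPdef, ← Finset.prod_pow]
    exact Finset.prod_congr rfl fun j _ => hdiagV j
  rw [hvol, hQk, one_mul]
  have hsm : 0 < Real.sqrt m := Real.sqrt_pos.mpr hmpos
  rw [inv_mul_eq_div, le_div_iff₀ hsm]
  calc Real.sqrt ((Zᵀ * Z).det) * Real.sqrt m
      = Real.sqrt (m * (Zᵀ * Z).det) := by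
        rw [Real.sqrt_mul hmpos.le, mul_comm]
    _ ≤ Real.sqrt (P ^ 2) := Real.sqrt_le_sqrt hfinal
    _ = P := Real.sqrt_sq hP0
end

section
/- Let μ be a k-admissible Borel measure on H. Define F_{k,α}(y) = sup_B μ(y + B)/|B|_k^α, the supremum over all centered ellipsoids B. Then for any p ∈ (0, ∞), ‖F_{k, αp/(p+1)}‖_{L^∞(μ)} ≤ 2^{αk} ‖F_{k,α}‖_{p,∞}^{p/(p+1)}. In particular, if F_{k,α} lies in weak-L^p(μ) then μ is k-curved with exponent αp/(p+1). -/
open MeasureTheory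
open scoped ENNReal BigOperators RealInnerProductSpace

/-- `μ` is `k`-admissible: every affine `(k-1)`-dimensional subspace is `μ`-null. -/
def Admissible {H : Type*} [NormedAddCommGroup H] [InnerProductSpace ℝ H]
    [MeasurableSpace H] (k : ℕ) (μ : Measure H) : Prop :=
  ∀ s : AffineSubspace ℝ H, Module.finrank ℝ s.direction = k - 1 → μ (s : Set H) = 0

/-- The maximal function `F_{k,α}(y) = sup_B μ(y + B) / |B|_k^α`, the supremum taken
over all centered ellipsoids `B`. -/
noncomputable def Fka {H : Type} [NormedAddCommGroup H] [InnerProductSpace ℝ H]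
    [MeasurableSpace H] (k : ℕ) (α : ℝ) (μ : Measure H) (y : H) : ℝ≥0∞ :=
  ⨆ B : CenteredEllipsoid H, μ ((fun x => y + x) '' B.set) / (B.content k) ^ α

/-- The `p`-th power of the weak-`L^p(μ)` quasinorm:
`‖f‖_{p,∞}^p = sup_{λ>0} λ^p μ{y : f y > λ}`. -/
noncomputable def weakNormPow {H : Type} [NormedAddCommGroup H] [InnerProductSpace ℝ H]
    [MeasurableSpace H] (p : ℝ) (μ : Measure H) (f : H → ℝ≥0∞) : ℝ≥0∞ :=
  ⨆ lam : NNReal, (lam : ℝ≥0∞) ^ p * μ {y | (lam : ℝ≥0∞) < f y}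

section AuxLemmas

open Set
open scoped NNReal

variable {H : Type} [NormedAddCommGroup H] [InnerProductSpace ℝ H]

private lemma ediv_mul_right (x a c : ℝ≥0∞) (hc0 : c ≠ 0) (hct : c ≠ ⊤) :
    x / (a * c) = x / a / c := by
  rw [div_eq_mul_inv, div_eq_mul_inv, div_eq_mul_inv,
    ENNReal.mul_inv (Or.inr hct) (Or.inr hc0), mul_assoc]

/-- The ellipsoid with all lengths doubled. -/
noncomputable def CE.dbl (B : CenteredEllipsoid H) : CenteredEllipsoid H :=
  ⟨B.ι, B.count, B.ω, B.orth, B.dense_span, fun i => 2 * B.ℓ i⟩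

lemma CE.dbl_content (B : CenteredEllipsoid H) (k : ℕ) :
    (CE.dbl B).content k = 2 ^ k * B.content k := by
  unfold CenteredEllipsoid.content CE.dbl
  rw [ENNReal.mul_iSup]
  exact iSup_congr fun s => by
    rw [Finset.prod_mul_distrib, Finset.prod_const, Finset.card_univ, Fintype.card_fin]

lemma CE.sub_mem {B : CenteredEllipsoid H} {a b : H} (ha : a ∈ B.set) (hb : b ∈ B.set) :
    a - b ∈ (CE.dbl B).set := by
  simp only [CenteredEllipsoid.set, Set.mem_setOf_eq, CE.dbl] at *
  have key : ∀ i, (‖⟪a - b, B.ω i⟫‖₊ : ℝ≥0∞) ^ 2 / (2 * B.ℓ i) ^ 2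
      ≤ ((‖⟪a, B.ω i⟫‖₊ : ℝ≥0∞) ^ 2 / (B.ℓ i) ^ 2
          + (‖⟪b, B.ω i⟫‖₊ : ℝ≥0∞) ^ 2 / (B.ℓ i) ^ 2) / 2 := by
    intro i
    set u := ‖⟪a, B.ω i⟫‖₊ with hu
    set v := ‖⟪b, B.ω i⟫‖₊ with hv
    have h1 : ‖⟪a - b, B.ω i⟫‖₊ ≤ u + v := by
      rw [inner_sub_left]; exact nnnorm_sub_le _ _
    have h2 : (‖⟪a - b, B.ω i⟫‖₊ : ℝ≥0∞) ^ 2 ≤ 2 * ((u : ℝ≥0∞) ^ 2 + (v : ℝ≥0∞) ^ 2) := by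
      calc (‖⟪a - b, B.ω i⟫‖₊ : ℝ≥0∞) ^ 2 ≤ ((u + v : ℝ≥0) : ℝ≥0∞) ^ 2 := by
            have : (‖⟪a - b, B.ω i⟫‖₊ : ℝ≥0∞) ≤ ((u + v : ℝ≥0) : ℝ≥0∞) := by
              exact_mod_cast h1
            gcongr
        _ ≤ ((2 * (u ^ 2 + v ^ 2) : ℝ≥0) : ℝ≥0∞) := by
            rw [← ENNReal.coe_pow]
            apply ENNReal.coe_le_coe.mpr
            rw [← NNReal.coe_le_coe]; push_cast; nlinarith [sq_nonneg ((u : ℝ) - v)]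
        _ = 2 * ((u : ℝ≥0∞) ^ 2 + (v : ℝ≥0∞) ^ 2) := by push_cast; ring
    calc (‖⟪a - b, B.ω i⟫‖₊ : ℝ≥0∞) ^ 2 / (2 * B.ℓ i) ^ 2
        ≤ 2 * ((u : ℝ≥0∞) ^ 2 + (v : ℝ≥0∞) ^ 2) / (2 * B.ℓ i) ^ 2 := by gcongr
      _ = ((u : ℝ≥0∞) ^ 2 + (v : ℝ≥0∞) ^ 2) / ((B.ℓ i) ^ 2 * 2) := by
          rw [mul_pow, show (2 : ℝ≥0∞) ^ 2 * (B.ℓ i) ^ 2 = 2 * ((B.ℓ i) ^ 2 * 2) by ring]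
          exact ENNReal.mul_div_mul_left _ _ two_ne_zero ENNReal.ofNat_ne_top
      _ = ((u : ℝ≥0∞) ^ 2 / (B.ℓ i) ^ 2 + (v : ℝ≥0∞) ^ 2 / (B.ℓ i) ^ 2) / 2 := by
          rw [ediv_mul_right _ _ _ two_ne_zero ENNReal.ofNat_ne_top, ENNReal.div_add_div_same]
  calc ∑' i, (‖⟪a - b, B.ω i⟫‖₊ : ℝ≥0∞) ^ 2 / (2 * B.ℓ i) ^ 2
      ≤ ∑' i, ((‖⟪a, B.ω i⟫‖₊ : ℝ≥0∞) ^ 2 / (B.ℓ i) ^ 2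
          + (‖⟪b, B.ω i⟫‖₊ : ℝ≥0∞) ^ 2 / (B.ℓ i) ^ 2) / 2 := ENNReal.tsum_le_tsum key
    _ = (∑' i, (‖⟪a, B.ω i⟫‖₊ : ℝ≥0∞) ^ 2 / (B.ℓ i) ^ 2
          + ∑' i, (‖⟪b, B.ω i⟫‖₊ : ℝ≥0∞) ^ 2 / (B.ℓ i) ^ 2) / 2 := by
        simp only [div_eq_mul_inv, ENNReal.tsum_mul_right, ENNReal.tsum_add]
    _ ≤ (1 + 1) / 2 := by gcongr
    _ = 1 := by
        rw [show (1 : ℝ≥0∞) + 1 = 2 by norm_num]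
        exact ENNReal.div_self two_ne_zero ENNReal.ofNat_ne_top

end AuxLemmas
section AuxLemmas2

open Set
open scoped NNReal

variable {H : Type} [NormedAddCommGroup H] [InnerProductSpace ℝ H]

/-- Bessel's inequality in `ℝ≥0∞`. -/
lemma CE.bessel (B : CenteredEllipsoid H) (x : H) :
    ∑' i, (‖⟪x, B.ω i⟫‖₊ : ℝ≥0∞) ^ 2 ≤ (‖x‖₊ : ℝ≥0∞) ^ 2 := by
  rw [ENNReal.tsum_eq_iSup_sum]
  refine iSup_le fun s => ?_
  have h1 : ∑ i ∈ s, (‖⟪x, B.ω i⟫‖₊ : ℝ≥0∞) ^ 2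
      = ((∑ i ∈ s, ‖⟪x, B.ω i⟫‖₊ ^ 2 : ℝ≥0) : ℝ≥0∞) := by push_cast; rfl
  rw [h1, ← ENNReal.coe_pow]
  apply ENNReal.coe_le_coe.mpr
  rw [← NNReal.coe_le_coe]
  push_cast
  have h2 := B.orth.sum_inner_products_le (s := s) x
  simpa [real_inner_comm] using h2

/-- Truncated (and quadrupled) ellipsoid. -/
noncomputable def CE.trunc (B : CenteredEllipsoid H) (n : ℕ) : CenteredEllipsoid H :=
  ⟨B.ι, B.count, B.ω, B.orth, B.dense_span, fun i => min (4 * B.ℓ i) n⟩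

lemma CE.trunc_content_ne_top (B : CenteredEllipsoid H) (k n : ℕ) :
    (CE.trunc B n).content k ≠ ⊤ := by
  have hle : (CE.trunc B n).content k ≤ (n : ℝ≥0∞) ^ k := by
    refine iSup_le fun s => ?_
    calc ∏ j, min (4 * B.ℓ (s j)) (n : ℝ≥0∞) ≤ ∏ _j : Fin k, (n : ℝ≥0∞) :=
          Finset.prod_le_prod' fun j _ => min_le_right _ _
      _ = (n : ℝ≥0∞) ^ k := by
          rw [Finset.prod_const, Finset.card_univ, Fintype.card_fin]
  exact ne_top_of_le_ne_top (ENNReal.pow_ne_top (ENNReal.natCast_ne_top n)) hle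

lemma CE.subset_iUnion_trunc (B : CenteredEllipsoid H) :
    B.set ⊆ ⋃ n : ℕ, (CE.trunc B n).set := by
  intro x hx
  have hx' : ∑' i, (‖⟪x, B.ω i⟫‖₊ : ℝ≥0∞) ^ 2 / (B.ℓ i) ^ 2 ≤ 1 := hx
  set N : ℕ := max 2 ⌈(‖x‖₊ ^ 2 : ℝ≥0)⌉₊ with hN
  have hN2 : (2 : ℕ) ≤ N := le_max_left _ _
  have hNx : (‖x‖₊ : ℝ≥0∞) ^ 2 ≤ (N : ℝ≥0∞) := by
    have : (‖x‖₊ ^ 2 : ℝ≥0) ≤ (N : ℝ≥0) := le_trans (Nat.le_ceil _) (by exact_mod_cast le_max_right _ _)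
    calc (‖x‖₊ : ℝ≥0∞) ^ 2 = ((‖x‖₊ ^ 2 : ℝ≥0) : ℝ≥0∞) := by push_cast; rfl
      _ ≤ ((N : ℝ≥0) : ℝ≥0∞) := ENNReal.coe_le_coe.mpr this
      _ = (N : ℝ≥0∞) := by push_cast; rfl
  refine Set.mem_iUnion.mpr ⟨N, ?_⟩
  show ∑' i, (‖⟪x, B.ω i⟫‖₊ : ℝ≥0∞) ^ 2 / (min (4 * B.ℓ i) (N : ℝ≥0∞)) ^ 2 ≤ 1
  have key : ∀ i, (‖⟪x, B.ω i⟫‖₊ : ℝ≥0∞) ^ 2 / (min (4 * B.ℓ i) (N : ℝ≥0∞)) ^ 2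
      ≤ (‖⟪x, B.ω i⟫‖₊ : ℝ≥0∞) ^ 2 / (4 * B.ℓ i) ^ 2
        + (‖⟪x, B.ω i⟫‖₊ : ℝ≥0∞) ^ 2 / (N : ℝ≥0∞) ^ 2 := by
    intro i
    rcases min_cases (4 * B.ℓ i) ((N : ℕ) : ℝ≥0∞) with ⟨h, _⟩ | ⟨h, _⟩ <;> rw [h]
    · exact le_self_add
    · exact le_add_self
  have hpart1 : ∑' i, (‖⟪x, B.ω i⟫‖₊ : ℝ≥0∞) ^ 2 / (4 * B.ℓ i) ^ 2 ≤ 2⁻¹ := by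
    have heq : ∀ i, (‖⟪x, B.ω i⟫‖₊ : ℝ≥0∞) ^ 2 / (4 * B.ℓ i) ^ 2
        = ((‖⟪x, B.ω i⟫‖₊ : ℝ≥0∞) ^ 2 / (B.ℓ i) ^ 2) * (16 : ℝ≥0∞)⁻¹ := by
      intro i
      rw [mul_pow, show (4 : ℝ≥0∞) ^ 2 * (B.ℓ i) ^ 2 = (B.ℓ i) ^ 2 * 16 by ring,
        ediv_mul_right _ _ _ (by norm_num) (by norm_num), div_eq_mul_inv]
    calc ∑' i, (‖⟪x, B.ω i⟫‖₊ : ℝ≥0∞) ^ 2 / (4 * B.ℓ i) ^ 2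
        = (∑' i, (‖⟪x, B.ω i⟫‖₊ : ℝ≥0∞) ^ 2 / (B.ℓ i) ^ 2) * (16 : ℝ≥0∞)⁻¹ := by
          simp only [heq, ENNReal.tsum_mul_right]
      _ ≤ 1 * (16 : ℝ≥0∞)⁻¹ := by gcongr
      _ = (16 : ℝ≥0∞)⁻¹ := one_mul _
      _ ≤ 2⁻¹ := ENNReal.inv_le_inv' (by norm_num)
  have hpart2 : ∑' i, (‖⟪x, B.ω i⟫‖₊ : ℝ≥0∞) ^ 2 / (N : ℝ≥0∞) ^ 2 ≤ 2⁻¹ := by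
    have h1 : ∑' i, (‖⟪x, B.ω i⟫‖₊ : ℝ≥0∞) ^ 2 / (N : ℝ≥0∞) ^ 2
        ≤ (N : ℝ≥0∞) / (N : ℝ≥0∞) ^ 2 := by
      calc ∑' i, (‖⟪x, B.ω i⟫‖₊ : ℝ≥0∞) ^ 2 / (N : ℝ≥0∞) ^ 2
          = (∑' i, (‖⟪x, B.ω i⟫‖₊ : ℝ≥0∞) ^ 2) / (N : ℝ≥0∞) ^ 2 := by
            simp only [div_eq_mul_inv, ENNReal.tsum_mul_right]
        _ ≤ (N : ℝ≥0∞) / (N : ℝ≥0∞) ^ 2 :=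
            ENNReal.div_le_div_right (le_trans (CE.bessel B x) hNx) _
    refine h1.trans ?_
    rw [ENNReal.div_le_iff_le_mul (Or.inl (by positivity)) (Or.inl (ENNReal.pow_ne_top (ENNReal.natCast_ne_top N)))]
    calc (N : ℝ≥0∞) = 2⁻¹ * (2 * N) := by
          rw [← mul_assoc, ENNReal.inv_mul_cancel two_ne_zero ENNReal.ofNat_ne_top, one_mul]
      _ ≤ 2⁻¹ * ((N : ℝ≥0∞) * N) := by
          gcongr
          exact_mod_cast hN2
      _ = 2⁻¹ * (N : ℝ≥0∞) ^ 2 := by rw [sq]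
  calc ∑' i, (‖⟪x, B.ω i⟫‖₊ : ℝ≥0∞) ^ 2 / (min (4 * B.ℓ i) (N : ℝ≥0∞)) ^ 2
      ≤ ∑' i, ((‖⟪x, B.ω i⟫‖₊ : ℝ≥0∞) ^ 2 / (4 * B.ℓ i) ^ 2
        + (‖⟪x, B.ω i⟫‖₊ : ℝ≥0∞) ^ 2 / (N : ℝ≥0∞) ^ 2) := ENNReal.tsum_le_tsum key
    _ = ∑' i, (‖⟪x, B.ω i⟫‖₊ : ℝ≥0∞) ^ 2 / (4 * B.ℓ i) ^ 2
        + ∑' i, (‖⟪x, B.ω i⟫‖₊ : ℝ≥0∞) ^ 2 / (N : ℝ≥0∞) ^ 2 := ENNReal.tsum_add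
    _ ≤ 2⁻¹ + 2⁻¹ := add_le_add hpart1 hpart2
    _ = 1 := by
        rw [show (2 : ℝ≥0∞)⁻¹ = 1 / 2 by rw [one_div]]
        exact ENNReal.add_halves 1

end AuxLemmas2
section AuxLemmas3

open Set
open scoped NNReal

variable {H : Type} [NormedAddCommGroup H] [InnerProductSpace ℝ H]

lemma CE.content_zero_subset [CompleteSpace H] (B : CenteredEllipsoid H) {k : ℕ} (hk : 0 < k)
    (hc : B.content k = 0) :
    ∃ s : Finset B.ι, s.card ≤ k - 1 ∧ B.set ⊆ ↑(Submodule.span ℝ (B.ω '' ↑s)) := by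
  classical
  have hprod : ∀ e : Fin k ↪ B.ι, ∏ j, B.ℓ (e j) = 0 := fun e =>
    le_antisymm (le_trans (le_iSup (fun e' : Fin k ↪ B.ι => ∏ j, B.ℓ (e' j)) e) hc.le) zero_le
  set S := {i : B.ι | B.ℓ i ≠ 0} with hS
  have hnot : ∀ t : Finset B.ι, ↑t ⊆ S → t.card ≠ k := by
    intro t hts htc
    set e := t.equivFinOfCardEq htc with he
    set emb : Fin k ↪ B.ι := ⟨fun j => ((e.symm j : t) : B.ι),
      Subtype.val_injective.comp e.symm.injective⟩ with hemb
    obtain ⟨j, _, hj0⟩ := Finset.prod_eq_zero_iff.mp (hprod emb)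
    exact hts (Finset.mem_coe.mpr (e.symm j).2) hj0
  have hfinS : S.Finite := by
    by_contra h
    obtain ⟨t, hts, htc⟩ := Set.Infinite.exists_subset_card_eq h k
    exact hnot t hts htc
  have hcard : hfinS.toFinset.card ≤ k - 1 := by
    by_contra h
    push_neg at h
    obtain ⟨t, hts, htc⟩ := Finset.exists_subset_card_eq (s := hfinS.toFinset) (n := k) (by omega)
    exact hnot t (fun i hi => hfinS.mem_toFinset.mp (hts hi)) htc
  refine ⟨hfinS.toFinset, hcard, ?_⟩
  intro x hx
  have hx' : ∑' i, (‖⟪x, B.ω i⟫‖₊ : ℝ≥0∞) ^ 2 / (B.ℓ i) ^ 2 ≤ 1 := hx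
  have hx0 : ∀ i : B.ι, B.ℓ i = 0 → ⟪x, B.ω i⟫ = 0 := by
    intro i hi
    by_contra hne
    have hterm := le_trans (ENNReal.le_tsum i) hx'
    rw [hi] at hterm
    have h0 : ((0 : ℝ≥0∞)) ^ 2 = 0 := by norm_num
    rw [h0, ENNReal.div_zero (by
      apply pow_ne_zero
      simpa using hne)] at hterm
    exact absurd hterm (by simp)
  set b := HilbertBasis.mk B.orth (ge_of_eq B.dense_span) with hbdef
  have hb : ∀ i, b i = B.ω i := fun i => congrFun (HilbertBasis.coe_mk _ _) i
  have hsum := b.hasSum_repr x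
  have hzero : ∀ i ∉ hfinS.toFinset, b.repr x i • b i = 0 := by
    intro i hi
    have hℓ : B.ℓ i = 0 := by
      by_contra hne
      exact hi (hfinS.mem_toFinset.mpr hne)
    have hrz : b.repr x i = 0 := by
      rw [b.repr_apply_apply]
      show ⟪b i, x⟫ = 0
      rw [hb i, real_inner_comm]
      exact hx0 i hℓ
    rw [hrz, zero_smul]
  have hxeq : x = ∑ i ∈ hfinS.toFinset, b.repr x i • b i :=
    hsum.unique (hasSum_sum_of_ne_finset_zero hzero)
  rw [SetLike.mem_coe, hxeq]
  refine Submodule.sum_mem _ fun i hi => Submodule.smul_mem _ _ (Submodule.subset_span ?_)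
  rw [hb i]
  exact Set.mem_image_of_mem _ (Finset.mem_coe.mpr hi)

lemma extend_li {n : ℕ} (m : ℕ) (hnm : n ≤ m) (hm : (m : Cardinal) ≤ Module.rank ℝ H)
    (v : Fin n → H) (hv : LinearIndependent ℝ v) :
    ∃ w : Fin m → H, LinearIndependent ℝ w ∧ Set.range v ⊆ Set.range w := by
  induction m with
  | zero =>
      obtain rfl : n = 0 := Nat.le_zero.mp hnm
      exact ⟨v, hv, subset_rfl⟩
  | succ m ih =>
      rcases Nat.lt_or_ge n (m + 1) with h | h
      · obtain ⟨w, hw, hvw⟩ := ih (Nat.lt_succ_iff.mp h)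
          (le_trans (by exact_mod_cast Nat.cast_le.mpr (Nat.le_succ m)) hm)
        have hrank : (m : Cardinal) < Module.rank ℝ H :=
          lt_of_lt_of_le (by exact_mod_cast Nat.cast_lt.mpr (Nat.lt_succ_self m)) hm
        obtain ⟨x, hx⟩ := exists_linearIndependent_snoc_of_lt_rank hw hrank
        refine ⟨Fin.snoc w x, hx, subset_trans hvw ?_⟩
        rintro z ⟨j, rfl⟩
        exact ⟨j.castSucc, Fin.snoc_castSucc ..⟩
      · obtain rfl : n = m + 1 := le_antisymm hnm h
        exact ⟨v, hv, subset_rfl⟩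

end AuxLemmas3
section AuxLemmas4

open Set MeasureTheory
open scoped NNReal

variable {H : Type} [NormedAddCommGroup H] [InnerProductSpace ℝ H]

/-- The "full" ellipsoid with all lengths infinite, for finite dimensional `H`. -/
noncomputable def CE.full (H : Type) [NormedAddCommGroup H] [InnerProductSpace ℝ H]
    [FiniteDimensional ℝ H] : CenteredEllipsoid H :=
  ⟨Fin (Module.finrank ℝ H), inferInstance, stdOrthonormalBasis ℝ H,
    (stdOrthonormalBasis ℝ H).orthonormal, by
      have hsp : Submodule.span ℝ (Set.range (stdOrthonormalBasis ℝ H)) = ⊤ := by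
        rw [← OrthonormalBasis.coe_toBasis]; exact Module.Basis.span_eq _
      rw [hsp]
      exact le_antisymm le_top (Submodule.le_topologicalClosure ⊤),
    fun _ => ⊤⟩

lemma CE.full_set [FiniteDimensional ℝ H] : (CE.full H).set = Set.univ := by
  ext x
  simp only [CenteredEllipsoid.set, CE.full, Set.mem_setOf_eq, Set.mem_univ, iff_true]
  have : ∀ i : Fin (Module.finrank ℝ H),
      (‖⟪x, stdOrthonormalBasis ℝ H i⟫‖₊ : ℝ≥0∞) ^ 2 / (⊤ : ℝ≥0∞) ^ 2 = 0 := by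
    intro i
    rw [ENNReal.top_pow (by norm_num), ENNReal.div_top]
  rw [tsum_congr this]
  simp

lemma CE.full_content [FiniteDimensional ℝ H] {k : ℕ} (hlt : Module.finrank ℝ H < k) :
    (CE.full H).content k = 0 := by
  haveI : IsEmpty (Fin k ↪ (CE.full H).ι) := by
    refine ⟨fun e => ?_⟩
    have e' : Fin k ↪ Fin (Module.finrank ℝ H) := e
    have := Fintype.card_le_of_injective e' e'.injective
    simp only [Fintype.card_fin] at this
    omega
  exact iSup_of_empty _

lemma bad_dim [MeasurableSpace H] [FiniteDimensional ℝ H] {k : ℕ} (μ : Measure H)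
    {α p : ℝ} (hα : 0 < α) (hp : 0 < p)
    (hlt : Module.finrank ℝ H < k) (hμ : μ ≠ 0) :
    weakNormPow p μ (Fka k α μ) = ⊤ := by
  have hFka : ∀ y : H, Fka k α μ y = ⊤ := by
    intro y
    refine top_unique (le_trans ?_
      (le_iSup (fun B : CenteredEllipsoid H => μ ((fun x => y + x) '' B.set) / (B.content k) ^ α)
        (CE.full H)))
    rw [CE.full_set, CE.full_content hlt, ENNReal.zero_rpow_of_pos hα]
    have himg : (fun x => y + x) '' Set.univ = Set.univ := by
      apply Set.image_univ_of_surjective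
      intro z
      exact ⟨z - y, by show y + (z - y) = z; rw [add_comm, sub_add_cancel]⟩
    rw [himg, ENNReal.div_zero (by rwa [Ne, Measure.measure_univ_eq_zero])]
  rw [eq_top_iff]
  refine ENNReal.le_of_forall_nnreal_lt fun r _ => ?_
  rcases eq_or_ne (μ Set.univ) ⊤ with hM | hM
  · refine le_trans ?_ (le_iSup
      (fun lam : ℝ≥0 => (lam : ℝ≥0∞) ^ p * μ {y | (lam : ℝ≥0∞) < Fka k α μ y}) 1)
    have hset : {y : H | ((1 : ℝ≥0) : ℝ≥0∞) < Fka k α μ y} = Set.univ := by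
      ext y; simp [hFka y]
    rw [hset, hM]
    simp [ENNReal.one_rpow]
  · set M := (μ Set.univ).toNNReal with hMdef
    have hM0 : M ≠ 0 := by
      simp only [hMdef, Ne, ENNReal.toNNReal_eq_zero_iff]
      push_neg
      exact ⟨by rwa [Ne, Measure.measure_univ_eq_zero], hM⟩
    set lam : ℝ≥0 := (r / M + 1) ^ (1 / p : ℝ) with hlam
    refine le_trans ?_ (le_iSup
      (fun l : ℝ≥0 => (l : ℝ≥0∞) ^ p * μ {y | (l : ℝ≥0∞) < Fka k α μ y}) lam)
    have hset : {y : H | (lam : ℝ≥0∞) < Fka k α μ y} = Set.univ := by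
      ext y; simp [hFka y]
    have hlampow : ((lam : ℝ≥0∞)) ^ p = ((r / M + 1 : ℝ≥0) : ℝ≥0∞) := by
      rw [← ENNReal.coe_rpow_of_nonneg _ hp.le]
      congr 1
      rw [hlam, ← NNReal.rpow_mul, one_div, inv_mul_cancel₀ hp.ne', NNReal.rpow_one]
    rw [hset, hlampow]
    calc (r : ℝ≥0∞) ≤ ((r / M + 1 : ℝ≥0) : ℝ≥0∞) * ((M : ℝ≥0) : ℝ≥0∞) := by
          rw [← ENNReal.coe_mul]
          apply ENNReal.coe_le_coe.mpr
          calc r = r / M * M := (div_mul_cancel₀ r hM0).symm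
            _ ≤ (r / M + 1) * M := mul_le_mul_left (self_le_add_right _ 1) M
      _ = ((r / M + 1 : ℝ≥0) : ℝ≥0∞) * μ Set.univ := by
          rw [ENNReal.coe_toNNReal hM]

end AuxLemmas4
section AuxLemmas5

open Set MeasureTheory
open scoped NNReal

variable {H : Type} [NormedAddCommGroup H] [InnerProductSpace ℝ H]

lemma meas_zero [CompleteSpace H] [MeasurableSpace H] {k : ℕ} (hk : 0 < k)
    (μ : Measure H) {α p : ℝ} (hα : 0 < α) (hp : 0 < p) (hadm : Admissible k μ)
    (hW : weakNormPow p μ (Fka k α μ) ≠ ⊤)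
    (y : H) (B : CenteredEllipsoid H) (hc : B.content k = 0) :
    μ ((fun x => y + x) '' B.set) = 0 := by
  rcases eq_or_ne μ 0 with rfl | hμ
  · simp
  have hrank : ((k - 1 : ℕ) : Cardinal) ≤ Module.rank ℝ H := by
    by_cases hfd : FiniteDimensional ℝ H
    · haveI := hfd
      by_cases hdim : Module.finrank ℝ H < k
      · exact absurd (bad_dim μ hα hp hdim hμ) hW
      · have h1 : k - 1 ≤ Module.finrank ℝ H := by omega
        calc ((k - 1 : ℕ) : Cardinal) ≤ ((Module.finrank ℝ H : ℕ) : Cardinal) := by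
              exact_mod_cast h1
          _ = Module.rank ℝ H := Module.finrank_eq_rank ℝ H
    · refine le_trans (Cardinal.nat_lt_aleph0 _).le (le_of_not_gt fun hlt => hfd ?_)
      exact Module.rank_lt_aleph0_iff.mp hlt
  obtain ⟨s, hcard, hsub⟩ := CE.content_zero_subset B hk hc
  set e := s.equivFin with he
  set v : Fin s.card → H := fun j => B.ω ((e.symm j : s) : B.ι) with hv_def
  have hv : LinearIndependent ℝ v :=
    B.orth.linearIndependent.comp _ (Subtype.val_injective.comp e.symm.injective)
  have hrange : Set.range v = B.ω '' ↑s := by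
    ext z
    constructor
    · rintro ⟨j, rfl⟩
      exact ⟨_, Finset.mem_coe.mpr (e.symm j).2, rfl⟩
    · rintro ⟨i, hi, rfl⟩
      refine ⟨e ⟨i, Finset.mem_coe.mp hi⟩, ?_⟩
      simp [hv_def]
  obtain ⟨w, hw, hvw⟩ := extend_li (k - 1) hcard hrank v hv
  have hspan : B.set ⊆ ↑(Submodule.span ℝ (Set.range w)) := by
    refine hsub.trans ?_
    refine Submodule.span_le.mpr ?_
    rw [← hrange]
    exact hvw.trans Submodule.subset_span
  have hμA : μ ↑(AffineSubspace.mk' y (Submodule.span ℝ (Set.range w))) = 0 := by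
    apply hadm
    rw [AffineSubspace.direction_mk', finrank_span_eq_card hw]
    simp
  refine le_antisymm (le_trans (measure_mono ?_) hμA.le) zero_le
  rintro z ⟨x, hx, rfl⟩
  apply AffineSubspace.mem_mk'.mpr
  show (fun x => y + x) x - y ∈ _
  simpa using hspan hx

end AuxLemmas5
section AuxLemmas6

open Set MeasureTheory
open scoped NNReal

variable {H : Type} [NormedAddCommGroup H] [InnerProductSpace ℝ H]

lemma main_case [MeasurableSpace H] {k : ℕ} (hk : 0 < k) (μ : Measure H)
    {α p : ℝ} (hα : 0 < α) (hp : 0 < p)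
    (y : H) (B : CenteredEllipsoid H) (hc0 : B.content k ≠ 0) (hct : B.content k ≠ ⊤) :
    μ ((fun x => y + x) '' B.set)
      ≤ ENNReal.ofReal (2 ^ (α * k)) * (weakNormPow p μ (Fka k α μ)) ^ (1 / (p + 1))
        * (B.content k) ^ (α * p / (p + 1)) := by
  set W := weakNormPow p μ (Fka k α μ) with hW_def
  set c := B.content k with hc_def
  set m := μ ((fun x => y + x) '' B.set) with hm_def
  set D := (2 ^ k * c) ^ α with hD_def
  have h2k0 : (2 : ℝ≥0∞) ^ k ≠ 0 := by positivity
  have h2kt : (2 : ℝ≥0∞) ^ k ≠ ⊤ := ENNReal.pow_ne_top ENNReal.ofNat_ne_top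
  have hD0 : D ≠ 0 := by
    rw [hD_def, Ne, ENNReal.rpow_eq_zero_iff]
    push_neg
    constructor
    · intro h; exact absurd h (mul_ne_zero h2k0 hc0)
    · intro h; linarith
  have hDt : D ≠ ⊤ :=
    ENNReal.rpow_ne_top_of_nonneg hα.le (ENNReal.mul_ne_top h2kt hct)
  have hFge : ∀ b' ∈ B.set, m / D ≤ Fka k α μ (y + b') := by
    intro b' hb'
    refine le_trans ?_
      (le_iSup (fun E : CenteredEllipsoid H =>
        μ ((fun x => (y + b') + x) '' E.set) / (E.content k) ^ α) (CE.dbl B))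
    have hsub : (fun x => y + x) '' B.set ⊆ (fun x => (y + b') + x) '' (CE.dbl B).set := by
      rintro z ⟨x, hx, rfl⟩
      exact ⟨x - b', CE.sub_mem hx hb', by show y + b' + (x - b') = y + x; abel⟩
    have hden : ((CE.dbl B).content k) ^ α = D := by rw [CE.dbl_content, hD_def, hc_def]
    rw [hden]
    exact ENNReal.div_le_div_right (measure_mono hsub) _
  have hWge : ∀ lam : ℝ≥0, (lam : ℝ≥0∞) < m / D → (lam : ℝ≥0∞) ^ p * m ≤ W := by
    intro lam hlam
    have hsub : (fun x => y + x) '' B.set ⊆ {y' | (lam : ℝ≥0∞) < Fka k α μ y'} := by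
      rintro z ⟨x, hx, rfl⟩
      exact lt_of_lt_of_le hlam (hFge x hx)
    calc (lam : ℝ≥0∞) ^ p * m
        ≤ (lam : ℝ≥0∞) ^ p * μ {y' | (lam : ℝ≥0∞) < Fka k α μ y'} := by
          exact mul_le_mul_right (measure_mono hsub) _
      _ ≤ W := le_iSup (fun l : ℝ≥0 => (l : ℝ≥0∞) ^ p * μ {y' | (l : ℝ≥0∞) < Fka k α μ y'}) lam
  rcases eq_or_ne m 0 with hm | hm
  · exact hm.trans_le zero_le
  rcases eq_or_ne m ⊤ with hmt | hmt
  · have hWtop : W = ⊤ := by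
      have h1 : ((1 : ℝ≥0) : ℝ≥0∞) < m / D := by
        rw [hmt, ENNReal.top_div_of_ne_top hDt]
        exact ENNReal.coe_lt_top
      have := hWge 1 h1
      rw [ENNReal.coe_one, ENNReal.one_rpow, one_mul, hmt] at this
      exact top_unique this
    rw [hWtop, ENNReal.top_rpow_of_pos (by positivity)]
    have hR0 : ENNReal.ofReal (2 ^ (α * k)) ≠ 0 := by
      rw [Ne, ENNReal.ofReal_eq_zero, not_le]
      positivity
    rw [ENNReal.mul_top hR0, ENNReal.top_mul (by
      rw [Ne, ENNReal.rpow_eq_zero_iff]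
      push_neg
      exact ⟨fun h => absurd h hc0, fun h => absurd h hct⟩)]
    exact le_top
  have hlam0 : m / D ≤ (W / m) ^ (1 / p : ℝ) := by
    refine ENNReal.le_of_forall_nnreal_lt fun lam hlam => ?_
    have h1 : (lam : ℝ≥0∞) ^ p ≤ W / m :=
      (ENNReal.le_div_iff_mul_le (Or.inl hm) (Or.inl hmt)).mpr (hWge lam hlam)
    have h2 := ENNReal.rpow_le_rpow h1 (by positivity : (0:ℝ) ≤ 1 / p)
    rwa [← ENNReal.rpow_mul, mul_one_div, div_self hp.ne', ENNReal.rpow_one] at h2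
  have hstep : (m / D) ^ p * m ≤ W := by
    have h3 := ENNReal.rpow_le_rpow hlam0 hp.le
    rw [← ENNReal.rpow_mul, one_div, inv_mul_cancel₀ hp.ne', ENNReal.rpow_one] at h3
    exact (ENNReal.le_div_iff_mul_le (Or.inl hm) (Or.inl hmt)).mp h3
  have hDp0 : D ^ (p : ℝ) ≠ 0 := by
    rw [Ne, ENNReal.rpow_eq_zero_iff]
    push_neg
    exact ⟨fun h => absurd h hD0, fun h => absurd h hDt⟩
  have hDpt : D ^ (p : ℝ) ≠ ⊤ := ENNReal.rpow_ne_top_of_nonneg hp.le hDt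
  have hmp1 : m ^ (p + 1) ≤ W * D ^ p := by
    calc m ^ (p + 1) = m ^ p * m := by
          rw [ENNReal.rpow_add p 1 hm hmt, ENNReal.rpow_one]
      _ = (m / D) ^ p * m * D ^ p := by
          rw [ENNReal.div_rpow_of_nonneg _ _ hp.le]
          rw [show m ^ p / D ^ p * m * D ^ p = m ^ p / D ^ p * D ^ p * m by ring]
          rw [ENNReal.div_mul_cancel hDp0 hDpt]
      _ ≤ W * D ^ p := mul_le_mul_left hstep _
  have hm' : m ≤ (W * D ^ p) ^ (1 / (p + 1) : ℝ) := by
    have h5 := ENNReal.rpow_le_rpow hmp1 (by positivity : (0:ℝ) ≤ 1 / (p + 1))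
    rwa [← ENNReal.rpow_mul, mul_one_div, div_self (by positivity : (p + 1 : ℝ) ≠ 0),
      ENNReal.rpow_one] at h5
  refine hm'.trans ?_
  rw [ENNReal.mul_rpow_of_nonneg _ _ (by positivity)]
  rw [← ENNReal.rpow_mul D, mul_one_div]
  rw [hD_def, ← ENNReal.rpow_mul]
  rw [show α * (p / (p + 1)) = α * p / (p + 1) by ring]
  rw [ENNReal.mul_rpow_of_nonneg _ _ (by positivity)]
  have h2kle : ((2 : ℝ≥0∞) ^ k) ^ (α * p / (p + 1)) ≤ ENNReal.ofReal (2 ^ (α * k)) := by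
    rw [← ENNReal.rpow_natCast 2 k, ← ENNReal.rpow_mul]
    calc (2 : ℝ≥0∞) ^ ((k : ℝ) * (α * p / (p + 1))) ≤ (2 : ℝ≥0∞) ^ (α * k) := by
          apply ENNReal.rpow_le_rpow_of_exponent_le one_le_two
          have hple : p / (p + 1) ≤ 1 := by
            rw [div_le_one (by positivity)]; linarith
          calc (k : ℝ) * (α * p / (p + 1)) = α * k * (p / (p + 1)) := by ring
            _ ≤ α * k * 1 := mul_le_mul_of_nonneg_left hple (by positivity)
            _ = α * k := mul_one _
      _ = ENNReal.ofReal (2 ^ (α * k)) := by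
          rw [show (2 : ℝ≥0∞) = ENNReal.ofReal 2 by norm_num,
            ENNReal.ofReal_rpow_of_pos two_pos]
  calc W ^ (1 / (p + 1)) * (((2:ℝ≥0∞) ^ k) ^ (α * p / (p + 1)) * c ^ (α * p / (p + 1)))
      ≤ W ^ (1 / (p + 1)) * (ENNReal.ofReal (2 ^ (α * k)) * c ^ (α * p / (p + 1))) := by
        exact mul_le_mul_right (mul_le_mul_left h2kle _) _
    _ = ENNReal.ofReal (2 ^ (α * k)) * W ^ (1 / (p + 1)) * c ^ (α * p / (p + 1)) := by ring

end AuxLemmas6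
section KeyLemma

open Set MeasureTheory
open scoped NNReal

variable {H : Type} [NormedAddCommGroup H] [InnerProductSpace ℝ H]

lemma key_bound [CompleteSpace H] [MeasurableSpace H] {k : ℕ} (hk : 0 < k)
    (μ : Measure H) {α p : ℝ} (hα : 0 < α) (hp : 0 < p) (hadm : Admissible k μ)
    (hW : weakNormPow p μ (Fka k α μ) ≠ ⊤) (y : H) (B : CenteredEllipsoid H) :
    μ ((fun x => y + x) '' B.set)
      ≤ ENNReal.ofReal (2 ^ (α * k)) * (weakNormPow p μ (Fka k α μ)) ^ (1 / (p + 1))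
        * (B.content k) ^ (α * p / (p + 1)) := by
  rcases eq_or_ne (B.content k) 0 with hc | hc0
  · rw [meas_zero hk μ hα hp hadm hW y B hc]
    exact zero_le
  rcases eq_or_ne (B.content k) ⊤ with hct | hct
  · rcases eq_or_ne (weakNormPow p μ (Fka k α μ)) 0 with hW0 | hW0
    · have hzero : ∀ n : ℕ, μ ((fun x => y + x) '' (CE.trunc B n).set) = 0 := by
        intro n
        rcases eq_or_ne ((CE.trunc B n).content k) 0 with h0 | h0
        · exact meas_zero hk μ hα hp hadm hW y _ h0
        · have hmc := main_case hk μ hα hp y (CE.trunc B n) h0 (CE.trunc_content_ne_top B k n)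
          rw [hW0, ENNReal.zero_rpow_of_pos (by positivity), mul_zero, zero_mul] at hmc
          exact le_antisymm hmc zero_le
      have hcov : μ ((fun x => y + x) '' B.set) = 0 := by
        refine le_antisymm ?_ zero_le
        have hsub : (fun x => y + x) '' B.set ⊆ ⋃ n : ℕ, (fun x => y + x) '' (CE.trunc B n).set := by
          rw [← Set.image_iUnion]
          exact Set.image_mono (CE.subset_iUnion_trunc B)
        calc μ ((fun x => y + x) '' B.set)
            ≤ μ (⋃ n : ℕ, (fun x => y + x) '' (CE.trunc B n).set) := measure_mono hsub
          _ ≤ ∑' n : ℕ, μ ((fun x => y + x) '' (CE.trunc B n).set) := measure_iUnion_le _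
          _ = 0 := by simp only [hzero, tsum_zero]
      rw [hcov]
      exact zero_le
    · rw [hct, ENNReal.top_rpow_of_pos (by positivity)]
      rw [ENNReal.mul_top (by
        apply mul_ne_zero
        · rw [Ne, ENNReal.ofReal_eq_zero, not_le]
          positivity
        · rw [Ne, ENNReal.rpow_eq_zero_iff]
          push_neg
          exact ⟨fun h => absurd h hW0, fun h => absurd h hW⟩)]
      exact le_top
  · exact main_case hk μ hα hp y B hc0 hct

end KeyLemma

theorem stmt12 {H : Type} [NormedAddCommGroup H] [InnerProductSpace ℝ H]
    [CompleteSpace H] [SecondCountableTopology H] [MeasurableSpace H] [BorelSpace H]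
    (k : ℕ) (hk : 0 < k) (μ : Measure H) (α : ℝ) (hα : 0 < α)
    (hadm : Admissible k μ) (p : ℝ) (hp : 0 < p) :
    essSup (Fka k (α * p / (p + 1)) μ) μ
        ≤ ENNReal.ofReal (2 ^ (α * k)) *
          (weakNormPow p μ (Fka k α μ)) ^ (1 / (p + 1))
      ∧
    (weakNormPow p μ (Fka k α μ) ≠ ∞ →
      ∃ C : ℝ, 0 < C ∧
        ∀ (y : H) (B : CenteredEllipsoid H),
          μ ((fun x => y + x) '' B.set)
            ≤ ENNReal.ofReal C * (B.content k) ^ (α * p / (p + 1))) := by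
  have hR0 : ENNReal.ofReal (2 ^ (α * k)) ≠ 0 := by
    rw [Ne, ENNReal.ofReal_eq_zero, not_le]
    positivity
  constructor
  · rcases eq_or_ne (weakNormPow p μ (Fka k α μ)) ⊤ with hW | hW
    · rw [hW, ENNReal.top_rpow_of_pos (by positivity), ENNReal.mul_top hR0]
      exact le_top
    · refine essSup_le_of_ae_le _ ?_
      apply MeasureTheory.ae_of_all
      intro y
      refine iSup_le fun B => ?_
      have hkey := key_bound hk μ hα hp hadm hW y B
      rcases eq_or_ne ((B.content k) ^ (α * p / (p + 1))) 0 with h0 | h0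
      · have hm0 : μ ((fun x => y + x) '' B.set) = 0 := by
          refine le_antisymm ?_ zero_le
          calc μ ((fun x => y + x) '' B.set)
              ≤ ENNReal.ofReal (2 ^ (α * k)) * (weakNormPow p μ (Fka k α μ)) ^ (1 / (p + 1))
                * (B.content k) ^ (α * p / (p + 1)) := hkey
            _ = 0 := by rw [h0, mul_zero]
        rw [hm0, ENNReal.zero_div]
        exact zero_le
      rcases eq_or_ne ((B.content k) ^ (α * p / (p + 1))) ⊤ with ht | ht
      · rw [ht, ENNReal.div_top]
        exact zero_le
      · rw [ENNReal.div_le_iff_le_mul (Or.inl h0) (Or.inl ht)]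
        exact hkey
  · intro hW
    set K := ENNReal.ofReal (2 ^ (α * k)) * (weakNormPow p μ (Fka k α μ)) ^ (1 / (p + 1))
      with hK_def
    have hKt : K ≠ ⊤ :=
      ENNReal.mul_ne_top ENNReal.ofReal_ne_top (ENNReal.rpow_ne_top_of_nonneg (by positivity) hW)
    refine ⟨K.toReal + 1, by positivity, fun y B => ?_⟩
    have hkey := key_bound hk μ hα hp hadm hW y B
    refine hkey.trans ?_
    apply mul_le_mul_left
    calc K = ENNReal.ofReal K.toReal := (ENNReal.ofReal_toReal hKt).symm
      _ ≤ ENNReal.ofReal (K.toReal + 1) := ENNReal.ofReal_le_ofReal (by linarith)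
end

section
/- Suppose nonnegative reals C_ε (defined for ε ∈ (0,1]) satisfy C_ε ≤ 1 for all ε and the recursive inequality C_ε ≤ K ε² + (1−ε)^k C_{ε/(1−ε)} for all ε ∈ (0,1) (with k ≥ 2 an integer and K ≥ 1). Then C_ε ≤ 2K ε for all ε ∈ (0,1]. -/
theorem stmt17 (k : ℕ) (hk : 2 ≤ k) (K : ℝ) (hK : 1 ≤ K)
    (C : ℝ → ℝ)
    (hC01 : ∀ ε ∈ Set.Ioc (0 : ℝ) 1, 0 ≤ C ε ∧ C ε ≤ 1)
    (hrec : ∀ ε ∈ Set.Ioo (0 : ℝ) 1, ε / (1 - ε) ≤ 1 →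
        C ε ≤ K * ε ^ 2 + (1 - ε) ^ k * C (ε / (1 - ε))) :
    ∀ ε ∈ Set.Ioc (0 : ℝ) 1, C ε ≤ 2 * K * ε := by
  have key : ∀ n : ℕ, ∀ ε : ℝ, ε ∈ Set.Ioc (0 : ℝ) 1 → 1 / ε ≤ (n : ℝ) + 2 →
      C ε ≤ 2 * K * ε := by
    intro n
    induction n with
    | zero =>
      rintro ε ⟨hε0, hε1⟩ h
      have h2 : 1 ≤ 2 * ε := by
        rw [div_le_iff₀ hε0] at h
        push_cast at h
        nlinarith
      have hb := (hC01 ε ⟨hε0, hε1⟩).2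
      nlinarith
    | succ n ih =>
      rintro ε ⟨hε0, hε1⟩ h
      by_cases hc : 1 / ε ≤ (n : ℝ) + 2
      · exact ih ε ⟨hε0, hε1⟩ hc
      push_neg at hc
      have hinv : 0 < 1 / ε := by positivity
      have hεhalf : 2 * ε < 1 := by
        have h2 : (2 : ℝ) < 1 / ε := by
          have : (0:ℝ) ≤ n := Nat.cast_nonneg n
          linarith
        rw [lt_div_iff₀ hε0] at h2
        linarith
      have h1ε : 0 < 1 - ε := by linarith
      set ε' := ε / (1 - ε) with hε'
      have hε'0 : 0 < ε' := by positivity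
      have hε'1 : ε' ≤ 1 := by
        rw [div_le_one h1ε]; linarith
      have hinvε : 1 / ε ≤ (n : ℝ) + 3 := by
        push_cast at h; linarith
      have hinv' : 1 / ε' ≤ (n : ℝ) + 2 := by
        have : 1 / ε' = 1 / ε - 1 := by
          rw [hε']; field_simp
        rw [this]; linarith
      have hCε' := ih ε' ⟨hε'0, hε'1⟩ hinv'
      have hCε'0 := (hC01 ε' ⟨hε'0, hε'1⟩).1
      have hrecε := hrec ε ⟨hε0, by linarith⟩ hε'1
      have hpow : (1 - ε) ^ k ≤ (1 - ε) ^ 2 :=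
        pow_le_pow_of_le_one (by linarith) (by linarith) hk
      have hpow0 : 0 ≤ (1 - ε) ^ k := by positivity
      have hmul : (1 - ε) ^ 2 * ε' = ε * (1 - ε) := by
        rw [hε']; field_simp
      have hstep : (1 - ε) ^ k * C ε' ≤ (1 - ε) ^ 2 * (2 * K * ε') := by
        calc (1 - ε) ^ k * C ε' ≤ (1 - ε) ^ k * (2 * K * ε') := by
              apply mul_le_mul_of_nonneg_left hCε' hpow0
          _ ≤ (1 - ε) ^ 2 * (2 * K * ε') := by
              apply mul_le_mul_of_nonneg_right hpow
              positivity
      have : (1 - ε) ^ 2 * (2 * K * ε') = 2 * K * (ε * (1 - ε)) := by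
        rw [show (1 - ε) ^ 2 * (2 * K * ε') = 2 * K * ((1 - ε) ^ 2 * ε') by ring, hmul]
      rw [this] at hstep
      nlinarith
  intro ε hε
  refine key ⌈1 / ε⌉₊ ε hε ?_
  have := Nat.le_ceil (1 / ε)
  linarith
end
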